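/- arXiv:1202.6219 — 3 statements merged into one kernel-verified Lean document; each statement's English description precedes it below -/
import Mathlib

section
/- Let 0 < 1/m ≪ ν ≪ τ ≪ d ≤ ε ≪ μ, ζ ≤ 1/2 and let G be an (ε, d, ζd, d/μ)-superregular bipartite graph with vertex classes U and V of size m. Let A ⊆ U with τm ≤ |A| ≤ (1−τ)m, and let B ⊆ V be the set of vertices in V with at least νm neighbours in A. Then |B| ≥ |A| + νm. -/
open Finset
open scoped Classical

/-- Number of edges of a bipartite graph `G` between `X` and `Y`. -/
noncomputable def eCnt {A B : Type*} [Fintype A] [Fintype B] (G : A → B → Prop)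
    (X : Finset A) (Y : Finset B) : ℕ :=
  ((X ×ˢ Y).filter (fun p => G p.1 p.2)).card

/-- Density of the bipartite graph `G` between `X` and `Y`. -/
noncomputable def dens {A B : Type*} [Fintype A] [Fintype B] (G : A → B → Prop)
    (X : Finset A) (Y : Finset B) : ℝ :=
  (eCnt G X Y : ℝ) / ((X.card : ℝ) * (Y.card : ℝ))

/-- `G` (bipartite with classes of size `m`) is (ε,d,c)-regular in the sparse sense:
(Reg1) all pairs of sets of size at least `εm` have density `(1±ε)d`;
(Reg2) any two distinct vertices in the same class have at most `c²m` common neighbours;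
(Reg3) the maximum degree is at most `cm`. -/
def SparseRegularPair {A B : Type*} [Fintype A] [Fintype B] (G : A → B → Prop)
    (ε d c : ℝ) (m : ℕ) : Prop :=
  (∀ X : Finset A, ∀ Y : Finset B, ε * (m : ℝ) ≤ (X.card : ℝ) → ε * (m : ℝ) ≤ (Y.card : ℝ) →
    (1 - ε) * d ≤ dens G X Y ∧ dens G X Y ≤ (1 + ε) * d) ∧
  (∀ u u' : A, u ≠ u' →
    ((Finset.univ.filter (fun b => G u b ∧ G u' b)).card : ℝ) ≤ c ^ 2 * (m : ℝ)) ∧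
  (∀ v v' : B, v ≠ v' →
    ((Finset.univ.filter (fun a => G a v ∧ G a v')).card : ℝ) ≤ c ^ 2 * (m : ℝ)) ∧
  (∀ a : A, ((Finset.univ.filter (fun b => G a b)).card : ℝ) ≤ c * (m : ℝ)) ∧
  (∀ b : B, ((Finset.univ.filter (fun a => G a b)).card : ℝ) ≤ c * (m : ℝ))

/-- `G` is (ε,d,d*,c)-superregular: (ε,d,c)-regular and with minimum degree at least `d* m`. -/
def SparseSuperRegularPair {A B : Type*} [Fintype A] [Fintype B] (G : A → B → Prop)
    (ε d dstar c : ℝ) (m : ℕ) : Prop :=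
  SparseRegularPair G ε d c m ∧
  (∀ a : A, dstar * (m : ℝ) ≤ ((Finset.univ.filter (fun b => G a b)).card : ℝ)) ∧
  (∀ b : B, dstar * (m : ℝ) ≤ ((Finset.univ.filter (fun a => G a b)).card : ℝ))

section Aux
variable {A B : Type*} [Fintype A] [Fintype B]

lemma eCnt_eq_sum_right (G : A → B → Prop) (X : Finset A) (Y : Finset B) :
    eCnt G X Y = ∑ y ∈ Y, (X.filter (fun u => G u y)).card := by
  classical
  unfold eCnt
  rw [Finset.card_filter, Finset.sum_product_right]
  exact Finset.sum_congr rfl fun y _ => (Finset.card_filter _ _).symm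

lemma eCnt_eq_sum_left (G : A → B → Prop) (X : Finset A) (Y : Finset B) :
    eCnt G X Y = ∑ x ∈ X, (Y.filter (fun v => G x v)).card := by
  classical
  unfold eCnt
  rw [Finset.card_filter, Finset.sum_product]
  exact Finset.sum_congr rfl fun x _ => (Finset.card_filter _ _).symm

lemma card_filter_real {C : Type*} (p : C → Prop) [DecidablePred p] (X : Finset C) :
    ((X.filter p).card : ℝ) = ∑ u ∈ X, (if p u then (1:ℝ) else 0) := by
  rw [Finset.card_filter, Nat.cast_sum]
  exact Finset.sum_congr rfl fun u _ => by split <;> simp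

lemma sum_sq_deg_le (G : A → B → Prop) (c M : ℝ) (hM : 0 ≤ M)
    (hdeg : ∀ u : A, ((Finset.univ.filter (fun b => G u b)).card : ℝ) ≤ c * M)
    (hcodeg : ∀ u u' : A, u ≠ u' →
      ((Finset.univ.filter (fun b => G u b ∧ G u' b)).card : ℝ) ≤ c ^ 2 * M)
    (X : Finset A) :
    ∑ y : B, ((X.filter (fun u => G u y)).card : ℝ) ^ 2 ≤
      (X.card : ℝ) * (c * M) + (X.card : ℝ) ^ 2 * (c ^ 2 * M) := by
  classical
  have key : ∑ y : B, ((X.filter (fun u => G u y)).card : ℝ) ^ 2 =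
      ∑ u ∈ X, ∑ u' ∈ X, ((Finset.univ.filter (fun y => G u y ∧ G u' y)).card : ℝ) := by
    have h1 : ∀ y : B, ((X.filter (fun u => G u y)).card : ℝ) ^ 2 =
        ∑ u ∈ X, ∑ u' ∈ X, (if G u y then (1:ℝ) else 0) * (if G u' y then (1:ℝ) else 0) := by
      intro y
      rw [card_filter_real, sq, Finset.sum_mul_sum]
    calc ∑ y : B, ((X.filter (fun u => G u y)).card : ℝ) ^ 2
        = ∑ y : B, ∑ u ∈ X, ∑ u' ∈ X,
            (if G u y then (1:ℝ) else 0) * (if G u' y then (1:ℝ) else 0) :=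
          Finset.sum_congr rfl fun y _ => h1 y
      _ = ∑ u ∈ X, ∑ u' ∈ X, ∑ y : B,
            (if G u y then (1:ℝ) else 0) * (if G u' y then (1:ℝ) else 0) := by
          rw [Finset.sum_comm]
          exact Finset.sum_congr rfl fun u _ => Finset.sum_comm
      _ = ∑ u ∈ X, ∑ u' ∈ X, ((Finset.univ.filter (fun y => G u y ∧ G u' y)).card : ℝ) := by
          refine Finset.sum_congr rfl fun u _ => Finset.sum_congr rfl fun u' _ => ?_
          rw [card_filter_real (fun y => G u y ∧ G u' y) (Finset.univ : Finset B)]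
          exact Finset.sum_congr rfl fun y _ => by
            by_cases h1 : G u y <;> by_cases h2 : G u' y <;> simp [h1, h2]
  rw [key]
  have hrow : ∀ u ∈ X, ∑ u' ∈ X, ((Finset.univ.filter (fun y => G u y ∧ G u' y)).card : ℝ)
      ≤ c * M + (X.card : ℝ) * (c ^ 2 * M) := by
    intro u hu
    rw [← Finset.add_sum_erase _ _ hu]
    have hdiag : ((Finset.univ.filter (fun y => G u y ∧ G u y)).card : ℝ) ≤ c * M := by
      have : (Finset.univ.filter (fun y => G u y ∧ G u y)) =
          (Finset.univ.filter (fun y => G u y)) :=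
        Finset.filter_congr fun y _ => by tauto
      rw [this]; exact hdeg u
    have hrest : ∑ u' ∈ X.erase u, ((Finset.univ.filter (fun y => G u y ∧ G u' y)).card : ℝ)
        ≤ (X.card : ℝ) * (c ^ 2 * M) := by
      have h1 : ∑ u' ∈ X.erase u, ((Finset.univ.filter (fun y => G u y ∧ G u' y)).card : ℝ)
          ≤ ((X.erase u).card : ℝ) * (c ^ 2 * M) := by
        have := Finset.sum_le_card_nsmul (X.erase u)
          (fun u' => ((Finset.univ.filter (fun y => G u y ∧ G u' y)).card : ℝ)) (c ^ 2 * M)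
          (fun u' hu' => hcodeg u u' (Ne.symm (Finset.ne_of_mem_erase hu')))
        simpa [nsmul_eq_mul] using this
      refine h1.trans (mul_le_mul_of_nonneg_right ?_ (by positivity))
      exact_mod_cast Nat.cast_le.mpr (Finset.card_erase_le)
    linarith
  have hs := Finset.sum_le_card_nsmul X _ _ hrow
  rw [nsmul_eq_mul] at hs
  calc ∑ u ∈ X, ∑ u' ∈ X, ((Finset.univ.filter (fun y => G u y ∧ G u' y)).card : ℝ)
      ≤ (X.card : ℝ) * (c * M + (X.card : ℝ) * (c ^ 2 * M)) := hs
    _ = (X.card : ℝ) * (c * M) + (X.card : ℝ) ^ 2 * (c ^ 2 * M) := by ring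

lemma cs_bound (G : A → B → Prop) (c M : ℝ) (hM : 0 ≤ M)
    (hdeg : ∀ u : A, ((Finset.univ.filter (fun b => G u b)).card : ℝ) ≤ c * M)
    (hcodeg : ∀ u u' : A, u ≠ u' →
      ((Finset.univ.filter (fun b => G u b ∧ G u' b)).card : ℝ) ≤ c ^ 2 * M)
    (X : Finset A) (S : Finset B) :
    ((eCnt G X S : ℝ)) ^ 2 ≤
      (S.card : ℝ) * ((X.card : ℝ) * (c * M) + (X.card : ℝ) ^ 2 * (c ^ 2 * M)) := by
  classical
  have he : (eCnt G X S : ℝ) = ∑ y ∈ S, ((X.filter (fun u => G u y)).card : ℝ) := by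
    rw [eCnt_eq_sum_right]; push_cast; rfl
  rw [he]
  have h1 : (∑ y ∈ S, ((X.filter (fun u => G u y)).card : ℝ)) ^ 2 ≤
      (S.card : ℝ) * ∑ y ∈ S, ((X.filter (fun u => G u y)).card : ℝ) ^ 2 :=
    sq_sum_le_card_mul_sum_sq
  have h2 : ∑ y ∈ S, ((X.filter (fun u => G u y)).card : ℝ) ^ 2 ≤
      ∑ y : B, ((X.filter (fun u => G u y)).card : ℝ) ^ 2 :=
    Finset.sum_le_sum_of_subset_of_nonneg (Finset.subset_univ S) (fun _ _ _ => by positivity)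
  have h3 := sum_sq_deg_le G c M hM hdeg hcodeg X
  have hS : (0:ℝ) ≤ (S.card : ℝ) := by positivity
  nlinarith [h1, h2, h3]

end Aux

set_option maxHeartbeats 1000000 in
/-- Lemma: robust expansion in sparse superregular pairs.
With the hierarchy `0 < 1/m ≪ ν ≪ τ ≪ d ≤ ε ≪ μ, ζ ≤ 1/2`: let `G` be an
`(ε, d, ζd, d/μ)`-superregular bipartite graph with vertex classes `U` and `V` of size `m`
(both `Fin m`). Let `A ⊆ U` with `τm ≤ |A| ≤ (1−τ)m`, and let `B` be the set of vertices
of `V` with at least `νm` neighbours in `A`. Then `|B| ≥ |A| + νm`. -/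
theorem stmt17 : ∀ μ ζ : ℝ, 0 < μ → μ ≤ 1 / 2 → 0 < ζ → ζ ≤ 1 / 2 →
    ∃ ε₀ : ℝ, 0 < ε₀ ∧ ∀ ε : ℝ, 0 < ε → ε ≤ ε₀ →
    ∀ d : ℝ, 0 < d → d ≤ ε →
    ∃ τ₀ : ℝ, 0 < τ₀ ∧ ∀ τ : ℝ, 0 < τ → τ ≤ τ₀ →
    ∃ ν₀ : ℝ, 0 < ν₀ ∧ ∀ ν : ℝ, 0 < ν → ν ≤ ν₀ →
    ∃ m₀ : ℕ, ∀ m : ℕ, m₀ ≤ m →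
    ∀ G : Fin m → Fin m → Prop,
    SparseSuperRegularPair G ε d (ζ * d) (d / μ) m →
    ∀ A : Finset (Fin m), τ * (m : ℝ) ≤ (A.card : ℝ) → (A.card : ℝ) ≤ (1 - τ) * (m : ℝ) →
    (A.card : ℝ) + ν * (m : ℝ) ≤
      (((Finset.univ : Finset (Fin m)).filter (fun v =>
        ν * (m : ℝ) ≤ ((A.filter (fun u => G u v)).card : ℝ))).card : ℝ) := by
  intro μ ζ hμ hμ2 hζ hζ2
  refine ⟨ζ^2*μ^2/16, by positivity, ?_⟩
  intro ε hε hεle d hd hdε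
  refine ⟨d, hd, ?_⟩
  intro τ hτ hτle
  refine ⟨min (τ*ζ*d/2) (min (ζ^2*μ^2/16) (min (d*ε/4) (τ/2))), by positivity, ?_⟩
  intro ν hν hνle
  refine ⟨⌈2*μ/(τ*d)⌉₊ + 1, ?_⟩
  intro m hm G hG A hA1 hA2
  obtain ⟨⟨reg1, codegU, codegV, degU, degV⟩, mindegU, mindegV⟩ := hG
  set M : ℝ := (m : ℝ) with hMdef
  set B : Finset (Fin m) := (Finset.univ : Finset (Fin m)).filter (fun v =>
        ν * M ≤ ((A.filter (fun u => G u v)).card : ℝ)) with hBdef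
  clear_value B
  clear_value M
  have hM0 : 2*μ/(τ*d) ≤ M := by
    have h1 : (2*μ/(τ*d)) ≤ (⌈2*μ/(τ*d)⌉₊ : ℝ) := Nat.le_ceil _
    have h2 : ((⌈2*μ/(τ*d)⌉₊ : ℕ) : ℝ) ≤ M := by
      have h3 : (⌈2*μ/(τ*d)⌉₊ : ℕ) ≤ m := le_trans (Nat.le_succ _) hm
      rw [hMdef]
      exact Nat.cast_le.mpr h3
    linarith
  clear hm
  -- basic parameter facts
  have hν1 : ν ≤ τ*ζ*d/2 := le_trans hνle (min_le_left _ _)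
  have hν2 : ν ≤ ζ^2*μ^2/16 := le_trans hνle (le_trans (min_le_right _ _) (min_le_left _ _))
  have hν3 : ν ≤ d*ε/4 :=
    le_trans hνle (le_trans (min_le_right _ _) (le_trans (min_le_right _ _) (min_le_left _ _)))
  have hν4 : ν ≤ τ/2 :=
    le_trans hνle (le_trans (min_le_right _ _) (le_trans (min_le_right _ _) (min_le_right _ _)))
  clear hνle
  have hζsq : ζ^2 ≤ 1/4 := by nlinarith
  have hμsq : μ^2 ≤ 1/4 := by nlinarith
  have hkey : ζ^2*μ^2 ≤ 1/16 := by nlinarith [sq_nonneg ζ, sq_nonneg μ]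
  have hε1 : ε ≤ 1 := by linarith [hεle, hkey]
  have hεhalf : ε ≤ 1/2 := by linarith [hεle, hkey]
  have hτ1 : τ ≤ 1 := by linarith [hτle, hdε, hε1]
  have hεμ : ε ≤ μ^2 := by
    have h1 : ζ^2*μ^2 ≤ 1*μ^2 :=
      mul_le_mul_of_nonneg_right (by linarith [hζsq]) (sq_nonneg μ)
    linarith [hεle]
  have hτd2μ : τ*d ≤ 2*μ := by
    have h1 : τ*d ≤ ε*ε := mul_le_mul (le_trans hτle hdε) hdε hd.le hε.le
    have h2 : ε*ε ≤ ε*1 := mul_le_mul_of_nonneg_left hε1 hε.le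
    have h3 : μ*μ ≤ 1*μ := mul_le_mul_of_nonneg_right (by linarith) hμ.le
    nlinarith [hεμ, sq_nonneg μ]
  have hM1 : (1:ℝ) ≤ M := le_trans ((one_le_div (by positivity)).mpr hτd2μ) hM0
  have hMpos : (0:ℝ) < M := lt_of_lt_of_le one_pos hM1
  set c : ℝ := d/μ with hcdef
  have hc : 0 < c := div_pos hd hμ
  have hM0' : 2*μ ≤ M * (τ*d) := (div_le_iff₀ (by positivity)).mp hM0
  have hkc0 : 2 ≤ τ * M * c := by
    rw [hcdef]
    rw [show τ * M * (d/μ) = M * (τ*d) / μ by ring, le_div_iff₀ hμ]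
    linarith
  have hk : τ * M ≤ (A.card : ℝ) := hA1
  have hkpos : (0:ℝ) < (A.card : ℝ) := lt_of_lt_of_le (by positivity) hA1
  have hνM : 0 ≤ ν * M := by positivity
  -- cardinalities of complements
  have hcardB : ((Bᶜ).card : ℝ) = M - (B.card : ℝ) := by
    have h1 : (Bᶜ).card = m - B.card := by rw [Finset.card_compl, Fintype.card_fin]
    have h2 : B.card ≤ m := by
      have := Finset.card_le_univ B
      simpa using this
    rw [h1, Nat.cast_sub h2, hMdef]
  have hcardA : ((Aᶜ).card : ℝ) = M - (A.card : ℝ) := by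
    have h1 : (Aᶜ).card = m - A.card := by rw [Finset.card_compl, Fintype.card_fin]
    have h2 : A.card ≤ m := by
      have := Finset.card_le_univ A
      simpa using this
    rw [h1, Nat.cast_sub h2, hMdef]
  -- many edges from A to V
  have hEAV : (A.card : ℝ) * (ζ*d*M) ≤ (eCnt G A Finset.univ : ℝ) := by
    rw [eCnt_eq_sum_left]
    push_cast
    have := Finset.card_nsmul_le_sum A
      (fun u => ((Finset.univ.filter (fun v => G u v)).card : ℝ)) (ζ*d*M)
      (fun u _ => mindegU u)
    simpa [nsmul_eq_mul, mul_comm] using this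
  -- split over B and Bᶜ
  have hsplit : (eCnt G A Finset.univ : ℝ) = (eCnt G A B : ℝ) + (eCnt G A Bᶜ : ℝ) := by
    rw [eCnt_eq_sum_right, eCnt_eq_sum_right, eCnt_eq_sum_right]
    push_cast
    rw [← Finset.sum_add_sum_compl B (fun y => ((A.filter (fun u => G u y)).card : ℝ))]
  -- few edges from A to Bᶜ
  have hEABc : (eCnt G A Bᶜ : ℝ) ≤ ((Bᶜ).card : ℝ) * (ν * M) := by
    rw [eCnt_eq_sum_right]
    push_cast
    have := Finset.sum_le_card_nsmul (Bᶜ)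
      (fun y => ((A.filter (fun u => G u y)).card : ℝ)) (ν * M)
      (fun y hy => by
        have hyB : y ∉ B := Finset.mem_compl.mp hy
        rw [hBdef] at hyB
        simp only [Finset.mem_filter, Finset.mem_univ, true_and] at hyB
        linarith [lt_of_not_ge hyB])
    simpa [nsmul_eq_mul, mul_comm] using this
  have hBcM : ((Bᶜ).card : ℝ) ≤ M := by
    have h2 : B.card ≤ m := by simpa using Finset.card_le_univ B
    have h3 : (0:ℝ) ≤ (B.card : ℝ) := by positivity
    linarith [hcardB]
  -- e(A,B) is big
  have hEAB : (A.card : ℝ) * (ζ*d*M) / 2 ≤ (eCnt G A B : ℝ) := by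
    have h2 : ν * M ≤ (τ*ζ*d/2) * M := mul_le_mul_of_nonneg_right hν1 hMpos.le
    have h4 : ν*M*M ≤ (τ*ζ*d/2)*M*M := mul_le_mul_of_nonneg_right h2 hMpos.le
    have h5 : τ*M*((ζ*d/2)*M) ≤ (A.card : ℝ)*((ζ*d/2)*M) :=
      mul_le_mul_of_nonneg_right hk (by positivity)
    have h3 : ((Bᶜ).card : ℝ) * (ν * M) ≤ M * (ν * M) :=
      mul_le_mul_of_nonneg_right hBcM hνM
    linarith only [hEAV, hsplit, hEABc, h2, h3, h4, h5]
  have hEABnn : (0:ℝ) ≤ (A.card : ℝ) * (ζ*d*M) / 2 := by positivity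
  -- Cauchy–Schwarz: B has at least ζ²μ²M/8 vertices
  have hb8 : ζ^2*μ^2*M/8 ≤ (B.card : ℝ) := by
    have hcs := cs_bound G c M hMpos.le degU codegU A B
    have hkc1 : 1 ≤ (A.card : ℝ) * c := by
      have h1 : τ*M*c ≤ (A.card : ℝ)*c := mul_le_mul_of_nonneg_right hk hc.le
      linarith only [h1, hkc0]
    have hsq : ((A.card : ℝ) * (ζ*d*M) / 2)^2 ≤ (eCnt G A B : ℝ)^2 :=
      pow_le_pow_left₀ hEABnn hEAB 2
    have hden : (A.card : ℝ) * (c*M) + (A.card : ℝ)^2*(c^2*M) ≤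
        2*((A.card : ℝ)^2*(c^2*M)) := by
      have h1 : 1*((A.card : ℝ)*c*M) ≤ ((A.card : ℝ)*c)*((A.card : ℝ)*c*M) :=
        mul_le_mul_of_nonneg_right hkc1 (by positivity)
      linarith only [h1]
    have hBnn : (0:ℝ) ≤ (B.card : ℝ) := by positivity
    have h1 : ((A.card : ℝ) * (ζ*d*M) / 2)^2 ≤
        (B.card : ℝ) * (2*((A.card : ℝ)^2*(c^2*M))) := by
      linarith only [hsq, hcs, mul_le_mul_of_nonneg_left hden hBnn]
    have hP : (0:ℝ) < 2*((A.card : ℝ)^2*(c^2*M)) := by positivity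
    have h2 : ((A.card : ℝ) * (ζ*d*M) / 2)^2 / (2*((A.card : ℝ)^2*(c^2*M))) ≤ (B.card : ℝ) :=
      (div_le_iff₀ hP).mpr h1
    have h3 : ((A.card : ℝ) * (ζ*d*M) / 2)^2 / (2*((A.card : ℝ)^2*(c^2*M))) = ζ^2*μ^2*M/8 := by
      rw [hcdef]
      field_simp
      ring
    linarith only [h3 ▸ h2]
  -- main case analysis
  by_cases hcase : (A.card : ℝ) + ν * M ≤ ζ^2*μ^2*M/8
  · linarith
  · push_neg at hcase
    have hνM16 : ν * M ≤ ζ^2*μ^2*M/16 := by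
      have := mul_le_mul_of_nonneg_right hν2 hMpos.le
      linarith only [this]
    have hk3 : ζ^2*μ^2*M/16 ≤ (A.card : ℝ) := by linarith [hcase, hνM16]
    have hεM16 : ε * M ≤ ζ^2*μ^2*M/16 := by
      have := mul_le_mul_of_nonneg_right hεle hMpos.le
      linarith only [this]
    have hεk : ε * M ≤ (A.card : ℝ) := le_trans hεM16 hk3
    -- Bᶜ is smaller than εm
    have hBclt : ((Bᶜ).card : ℝ) < ε * M := by
      by_contra h
      push_neg at h
      have hreg := (reg1 A Bᶜ hεk h).1
      unfold _root_.dens at hreg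
      have hβpos : (0:ℝ) < ((Bᶜ).card : ℝ) := lt_of_lt_of_le (by positivity) h
      have hd1 : (1-ε)*d*((A.card : ℝ)*((Bᶜ).card : ℝ)) ≤ (eCnt G A Bᶜ : ℝ) :=
        (le_div_iff₀ (by positivity)).mp hreg
      have h2 : (1-ε)*d*(A.card : ℝ) ≤ ν*M := by
        have h21 := hd1.trans hEABc
        nlinarith only [h21, hβpos]
      have h4 : d*(ε*M) ≤ d*(A.card : ℝ) := mul_le_mul_of_nonneg_left hεk hd.le
      have h5 : (1/2)*(d*(A.card : ℝ)) ≤ (1-ε)*(d*(A.card : ℝ)) :=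
        mul_le_mul_of_nonneg_right (by linarith) (by positivity)
      have h6 : ν*M ≤ d*ε/4*M := mul_le_mul_of_nonneg_right hν3 hMpos.le
      have h7 : (0:ℝ) < d*ε*M := by positivity
      linarith only [h2, h4, h5, h6, h7]
    by_cases hcase2 : (A.card : ℝ) + ν * M ≤ (1-ε)*M
    · linarith [hcardB, hBclt]
    · push_neg at hcase2
      by_contra hcon
      push_neg at hcon
      have hβ2 : M - (A.card : ℝ) - ν*M < ((Bᶜ).card : ℝ) := by linarith [hcardB]
      have hνM2 : ν * M ≤ (τ/2)*M := mul_le_mul_of_nonneg_right hν4 hMpos.le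
      have hβ3 : τ*M/2 ≤ ((Bᶜ).card : ℝ) := by linarith [hβ2, hA2, hνM2]
      have hβpos : (0:ℝ) < ((Bᶜ).card : ℝ) := by
        have := mul_pos hτ hMpos
        linarith
      -- flipped graph edge counts
      have e1 : ((Bᶜ).card : ℝ) * (ζ*d*M) ≤ (eCnt (fun v u => G u v) Bᶜ Finset.univ : ℝ) := by
        rw [eCnt_eq_sum_left]
        push_cast
        have := Finset.card_nsmul_le_sum (Bᶜ)
          (fun v => ((Finset.univ.filter (fun u => G u v)).card : ℝ)) (ζ*d*M)
          (fun v _ => mindegV v)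
        simpa [nsmul_eq_mul, mul_comm] using this
      have esplit : (eCnt (fun v u => G u v) Bᶜ Finset.univ : ℝ) =
          (eCnt (fun v u => G u v) Bᶜ A : ℝ) + (eCnt (fun v u => G u v) Bᶜ Aᶜ : ℝ) := by
        rw [eCnt_eq_sum_right, eCnt_eq_sum_right, eCnt_eq_sum_right]
        push_cast
        rw [← Finset.sum_add_sum_compl A (fun u => (((Bᶜ).filter (fun v => G u v)).card : ℝ))]
      have e2 : (eCnt (fun v u => G u v) Bᶜ A : ℝ) ≤ ((Bᶜ).card : ℝ) * (ν*M) := by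
        rw [eCnt_eq_sum_left]
        push_cast
        have := Finset.sum_le_card_nsmul (Bᶜ)
          (fun v => ((A.filter (fun u => G u v)).card : ℝ)) (ν * M)
          (fun v hv => by
            have hvB : v ∉ B := Finset.mem_compl.mp hv
            rw [hBdef] at hvB
            simp only [Finset.mem_filter, Finset.mem_univ, true_and] at hvB
            linarith [lt_of_not_ge hvB])
        simpa [nsmul_eq_mul, mul_comm] using this
      have hνζd : ν*M ≤ (ζ*d/2)*M := by
        have h1 : τ*(ζ*d) ≤ 1*(ζ*d) :=
          mul_le_mul_of_nonneg_right hτ1 (by positivity)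
        have h2 : ν ≤ ζ*d/2 := by linarith [hν1]
        exact mul_le_mul_of_nonneg_right h2 hMpos.le
      have e3 : ((Bᶜ).card : ℝ) * (ζ*d*M) / 2 ≤ (eCnt (fun v u => G u v) Bᶜ Aᶜ : ℝ) := by
        have h1 : ((Bᶜ).card : ℝ)*(ν*M) ≤ ((Bᶜ).card : ℝ)*((ζ*d/2)*M) :=
          mul_le_mul_of_nonneg_left hνζd hβpos.le
        linarith only [e1, esplit, e2, h1]
      have e3nn : (0:ℝ) ≤ ((Bᶜ).card : ℝ) * (ζ*d*M) / 2 := by positivity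
      have hcs2 := cs_bound (fun v u => G u v) c M hMpos.le
        (fun v => degV v) (fun v v' hvv => codegV v v' hvv) Bᶜ Aᶜ
      have hβc1 : 1 ≤ ((Bᶜ).card : ℝ) * c := by
        have h1 : (τ*M/2)*c ≤ ((Bᶜ).card : ℝ)*c := mul_le_mul_of_nonneg_right hβ3 hc.le
        linarith only [h1, hkc0]
      have hsq2 : (((Bᶜ).card : ℝ) * (ζ*d*M) / 2)^2 ≤
          (eCnt (fun v u => G u v) Bᶜ Aᶜ : ℝ)^2 := pow_le_pow_left₀ e3nn e3 2
      have hden2 : ((Bᶜ).card : ℝ) * (c*M) + ((Bᶜ).card : ℝ)^2*(c^2*M) ≤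
          2*(((Bᶜ).card : ℝ)^2*(c^2*M)) := by
        have h1 : 1*(((Bᶜ).card : ℝ)*c*M) ≤ (((Bᶜ).card : ℝ)*c)*(((Bᶜ).card : ℝ)*c*M) :=
          mul_le_mul_of_nonneg_right hβc1 (by positivity)
        linarith only [h1]
      have hAnn : (0:ℝ) ≤ ((Aᶜ).card : ℝ) := by positivity
      have h1 : (((Bᶜ).card : ℝ) * (ζ*d*M) / 2)^2 ≤
          ((Aᶜ).card : ℝ) * (2*(((Bᶜ).card : ℝ)^2*(c^2*M))) := by
        linarith only [hsq2, hcs2, mul_le_mul_of_nonneg_left hden2 hAnn]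
      have hP : (0:ℝ) < 2*(((Bᶜ).card : ℝ)^2*(c^2*M)) := by positivity
      have h2 : (((Bᶜ).card : ℝ) * (ζ*d*M) / 2)^2 / (2*(((Bᶜ).card : ℝ)^2*(c^2*M))) ≤
          ((Aᶜ).card : ℝ) := (div_le_iff₀ hP).mpr h1
      have h3 : (((Bᶜ).card : ℝ) * (ζ*d*M) / 2)^2 / (2*(((Bᶜ).card : ℝ)^2*(c^2*M)))
          = ζ^2*μ^2*M/8 := by
        rw [hcdef]
        field_simp
        ring
      have hAc8 : ζ^2*μ^2*M/8 ≤ ((Aᶜ).card : ℝ) := by linarith only [h3 ▸ h2]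
      have hlast : ((Aᶜ).card : ℝ) < ε*M + ν*M := by
        rw [hcardA]; linarith [hcase2]
      linarith [hεM16, hνM16]
end

section
/- Let 0 < 1/m ≪ d' ≪ 1/k ≪ ε ≪ d ≪ ζ ≤ 1/2 and let G be an (ε, d', ζd', d'/d)-superregular bipartite graph with vertex classes U and V of size m. Then G has a perfect matching. -/
open Finset
open scoped Classical

lemma expansion_small {A B : Type*} [Fintype A] [Fintype B] [DecidableEq B] (G : A → B → Prop)
    {ζ d' c : ℝ} {m : ℕ} (hc : 0 < c) (hζ : 0 < ζ) (hd' : 0 < d') (hm : 0 < m)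
    (hcodeg : ∀ u u' : A, u ≠ u' →
      ((Finset.univ.filter (fun b => G u b ∧ G u' b)).card : ℝ) ≤ c ^ 2 * m)
    (hdegmax : ∀ a : A, ((Finset.univ.filter (fun b => G a b)).card : ℝ) ≤ c * m)
    (hdegmin : ∀ a : A, ζ * d' * m ≤ ((Finset.univ.filter (fun b => G a b)).card : ℝ))
    (S : Finset A)
    (hsize : c + (S.card : ℝ) * c ^ 2 ≤ ζ ^ 2 * d' ^ 2 * m) :
    S.card ≤ (S.biUnion (fun u => Finset.univ.filter (fun b => G u b))).card := by
  rcases S.eq_empty_or_nonempty with rfl | hSne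
  · simp
  set N := S.biUnion (fun u => Finset.univ.filter (fun b => G u b)) with hN
  set degS : B → ℕ := fun v => (S.filter (fun u => G u v)).card with hdegS
  -- total edge count from S
  set E : ℕ := ∑ u ∈ S, (univ.filter (fun b => G u b)).card with hE
  have hElb : (S.card : ℝ) * (ζ * d' * m) ≤ (E : ℝ) := by
    rw [hE]
    push_cast
    calc (S.card : ℝ) * (ζ * d' * m) = ∑ _u ∈ S, ζ * d' * m := by
          rw [Finset.sum_const, nsmul_eq_mul]
      _ ≤ _ := Finset.sum_le_sum (fun u _ => hdegmin u)
  -- double counting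
  have hEeq : E = ∑ v ∈ N, degS v := by
    have h1 : E = ∑ u ∈ S, ∑ v ∈ (univ : Finset B), if G u v then 1 else 0 := by
      rw [hE]; exact Finset.sum_congr rfl (fun u _ => Finset.card_filter _ _)
    have h2 : ∑ v ∈ (univ : Finset B), degS v = ∑ v ∈ N, degS v := by
      refine (Finset.sum_subset (Finset.subset_univ N) ?_).symm
      intro v _ hv
      rw [hdegS]
      simp only [Finset.card_eq_zero, Finset.filter_eq_empty_iff]
      intro u hu hGuv
      exact hv (Finset.mem_biUnion.mpr ⟨u, hu, Finset.mem_filter.mpr ⟨Finset.mem_univ _, hGuv⟩⟩)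
    rw [h1, Finset.sum_comm, ← h2]
    exact Finset.sum_congr rfl (fun v _ => (Finset.card_filter _ _).symm)
  -- Cauchy-Schwarz
  have hCS : (E : ℝ) ^ 2 ≤ (N.card : ℝ) * ∑ v ∈ N, (degS v : ℝ) ^ 2 := by
    have := sq_sum_le_card_mul_sum_sq (s := N) (f := fun v => (degS v : ℝ))
    calc (E : ℝ) ^ 2 = (∑ v ∈ N, (degS v : ℝ)) ^ 2 := by rw [hEeq]; push_cast; ring
      _ ≤ _ := this
  -- sum of squares = sum of codegrees
  have hsq : ∑ v ∈ N, (degS v : ℝ) ^ 2 ≤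
      ∑ u ∈ S, ∑ u' ∈ S, ((univ.filter (fun b => G u b ∧ G u' b)).card : ℝ) := by
    have h3 : ∑ v ∈ N, (degS v : ℝ) ^ 2 ≤ ∑ v ∈ (univ : Finset B), (degS v : ℝ) ^ 2 :=
      Finset.sum_le_sum_of_subset_of_nonneg (Finset.subset_univ N)
        (fun v _ _ => by positivity)
    have h4 : ∑ v ∈ (univ : Finset B), (degS v : ℝ) ^ 2 =
        ∑ u ∈ S, ∑ u' ∈ S, ((univ.filter (fun b => G u b ∧ G u' b)).card : ℝ) := by
      have : ∀ v : B, (degS v : ℝ) ^ 2 =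
          ∑ u ∈ S, ∑ u' ∈ S, (if G u v ∧ G u' v then (1:ℝ) else 0) := by
        intro v
        have hv : (degS v : ℝ) = ∑ u ∈ S, (if G u v then (1:ℝ) else 0) := by
          show ((S.filter (fun u => G u v)).card : ℝ) = _
          rw [Finset.card_filter]; push_cast; rfl
        rw [hv, sq, Finset.sum_mul_sum]
        refine Finset.sum_congr rfl (fun u _ => Finset.sum_congr rfl (fun u' _ => ?_))
        by_cases h1 : G u v <;> by_cases h2 : G u' v <;> simp [h1, h2]
      simp_rw [this]
      rw [Finset.sum_comm]
      refine Finset.sum_congr rfl (fun u _ => ?_)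
      rw [Finset.sum_comm]
      refine Finset.sum_congr rfl (fun u' _ => ?_)
      rw [Finset.card_filter]
      push_cast
      rfl
    rw [← h4]; exact h3
  -- bound the codegree sum
  have hP : ∑ u ∈ S, ∑ u' ∈ S, ((univ.filter (fun b => G u b ∧ G u' b)).card : ℝ) ≤
      (S.card : ℝ) * (c * m) + (S.card : ℝ) ^ 2 * (c ^ 2 * m) := by
    have hrow : ∀ u ∈ S, ∑ u' ∈ S, ((univ.filter (fun b => G u b ∧ G u' b)).card : ℝ) ≤
        c * m + (S.card : ℝ) * (c ^ 2 * m) := by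
      intro u hu
      rw [← Finset.add_sum_erase S _ hu]
      have hdiag : ((univ.filter (fun b => G u b ∧ G u b)).card : ℝ) ≤ c * m := by
        have : (univ.filter (fun b => G u b ∧ G u b)) = univ.filter (fun b => G u b) := by
          ext b; simp
        rw [this]; exact hdegmax u
      have hoff : ∑ u' ∈ S.erase u, ((univ.filter (fun b => G u b ∧ G u' b)).card : ℝ) ≤
          (S.card : ℝ) * (c ^ 2 * m) := by
        calc ∑ u' ∈ S.erase u, ((univ.filter (fun b => G u b ∧ G u' b)).card : ℝ)
            ≤ ∑ _u' ∈ S.erase u, c ^ 2 * m :=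
              Finset.sum_le_sum (fun u' hu' => hcodeg u u' (Finset.ne_of_mem_erase hu').symm)
          _ = ((S.erase u).card : ℝ) * (c ^ 2 * m) := by rw [Finset.sum_const, nsmul_eq_mul]
          _ ≤ (S.card : ℝ) * (c ^ 2 * m) := by
              have : ((S.erase u).card : ℝ) ≤ (S.card : ℝ) := by
                exact_mod_cast Finset.card_le_card (Finset.erase_subset _ _)
              have h0 : (0:ℝ) ≤ c ^ 2 * m := by positivity
              nlinarith
      linarith
    calc ∑ u ∈ S, ∑ u' ∈ S, ((univ.filter (fun b => G u b ∧ G u' b)).card : ℝ)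
        ≤ ∑ _u ∈ S, (c * m + (S.card : ℝ) * (c ^ 2 * m)) := Finset.sum_le_sum hrow
      _ = (S.card : ℝ) * (c * m + (S.card : ℝ) * (c ^ 2 * m)) := by
          rw [Finset.sum_const, nsmul_eq_mul]
      _ = (S.card : ℝ) * (c * m) + (S.card : ℝ) ^ 2 * (c ^ 2 * m) := by ring
  -- combine
  have hs1 : (1 : ℝ) ≤ (S.card : ℝ) := by exact_mod_cast Finset.card_pos.mpr hSne
  have hmpos : (0 : ℝ) < m := by exact_mod_cast hm
  set s := (S.card : ℝ)
  set n := (N.card : ℝ)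
  have hn0 : (0:ℝ) ≤ n := Nat.cast_nonneg _
  have hD : (E:ℝ)^2 ≤ n * (s * (c*m) + s^2 * (c^2*m)) := by
    calc (E:ℝ)^2 ≤ n * ∑ v ∈ N, (degS v : ℝ) ^ 2 := hCS
      _ ≤ n * (s * (c*m) + s^2 * (c^2*m)) := by
          exact mul_le_mul_of_nonneg_left (le_trans hsq hP) hn0
  have hgoal : s ≤ n := by
    have hs0 : (0:ℝ) < s := by linarith
    have hDpos : (0:ℝ) < s * (c*m) + s^2 * (c^2*m) := by
      have h1 : (0:ℝ) < s * (c * m) := mul_pos hs0 (mul_pos hc hmpos)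
      have h2 : (0:ℝ) ≤ s^2 * (c^2*m) := by positivity
      linarith
    have key : s * (s * (c*m) + s^2 * (c^2*m)) ≤ n * (s * (c*m) + s^2 * (c^2*m)) := by
      calc s * (s * (c*m) + s^2 * (c^2*m)) = s^2 * m * (c + s * c^2) := by ring
        _ ≤ s^2 * m * (ζ^2 * d'^2 * m) := by
            have : (0:ℝ) ≤ s^2 * m := by positivity
            nlinarith
        _ = (s * (ζ * d' * m))^2 := by ring
        _ ≤ (E:ℝ)^2 := by
            have h0 : (0:ℝ) ≤ s * (ζ * d' * m) := by positivity
            nlinarith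
        _ ≤ _ := hD
    exact le_of_mul_le_mul_right key hDpos
  exact Nat.cast_le.mp hgoal

/-- Lemma: perfect matchings in sparse superregular pairs.
With the hierarchy `0 < 1/m ≪ d' ≪ 1/k ≪ ε ≪ d ≪ ζ ≤ 1/2`: every
`(ε, d', ζd', d'/d)`-superregular bipartite graph with vertex classes of size `m`
(both `Fin m`) has a perfect matching. -/
theorem stmt18 : ∀ ζ : ℝ, 0 < ζ → ζ ≤ 1 / 2 →
    ∃ d₀ : ℝ, 0 < d₀ ∧ ∀ d : ℝ, 0 < d → d ≤ d₀ →
    ∃ ε₀ : ℝ, 0 < ε₀ ∧ ∀ ε : ℝ, 0 < ε → ε ≤ ε₀ →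
    ∃ k₀ : ℕ, ∀ k : ℕ, k₀ ≤ k →
    ∃ d'₀ : ℝ, 0 < d'₀ ∧ ∀ d' : ℝ, 0 < d' → d' ≤ d'₀ →
    ∃ m₀ : ℕ, ∀ m : ℕ, m₀ ≤ m →
    ∀ G : Fin m → Fin m → Prop,
    SparseSuperRegularPair G ε d' (ζ * d') (d' / d) m →
    ∃ σ : Equiv.Perm (Fin m), ∀ u, G u (σ u) := by
  intro ζ hζ hζ2
  refine ⟨1, one_pos, fun d hd hd1 => ?_⟩
  refine ⟨min (ζ^2 * d^2 / 2) (1/2), by positivity, fun ε hε hε0 => ?_⟩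
  refine ⟨0, fun k _ => ?_⟩
  refine ⟨1, one_pos, fun d' hd' hd'1 => ?_⟩
  refine ⟨max 1 ⌈2 / (ζ^2 * d * d')⌉₊, fun m hm G hG => ?_⟩
  have hm1 : 1 ≤ m := le_trans (le_max_left _ _) hm
  have hmpos : (0:ℝ) < m := by exact_mod_cast hm1
  have hmceil : 2 / (ζ^2 * d * d') ≤ (m : ℝ) := by
    calc 2 / (ζ^2 * d * d') ≤ (⌈2 / (ζ^2 * d * d')⌉₊ : ℝ) := Nat.le_ceil _
      _ ≤ (m : ℝ) := by exact_mod_cast le_trans (le_max_right _ _) hm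
  set c := d' / d with hcdef
  have hc : 0 < c := div_pos hd' hd
  obtain ⟨⟨hReg1, hReg2a, hReg2b, hReg3a, hReg3b⟩, hMinA, hMinB⟩ := hG
  have hεd : ε ≤ ζ^2 * d^2 / 2 := le_trans hε0 (min_le_left _ _)
  have hεhalf : ε ≤ 1/2 := le_trans hε0 (min_le_right _ _)
  -- size condition for sets of size ≤ ε m
  have hsizekey : ∀ s : ℝ, 0 ≤ s → s ≤ ε * m → c + s * c ^ 2 ≤ ζ ^ 2 * d' ^ 2 * m := by
    intro s hs0 hsle
    have h1 : (2:ℝ) ≤ (m:ℝ) * (ζ^2 * d * d') := by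
      rw [div_le_iff₀ (by positivity : (0:ℝ) < ζ^2 * d * d')] at hmceil
      exact hmceil
    have hc2 : c ^ 2 = d'^2 / d^2 := by rw [hcdef]; rw [div_pow]
    have hkey1 : c ≤ ζ^2 * d'^2 * m / 2 := by
      rw [hcdef, div_le_iff₀ hd]
      nlinarith [mul_pos hd' (mul_pos hd hmpos)]
    have hkey2 : s * c ^ 2 ≤ ζ^2 * d'^2 * m / 2 := by
      rw [hc2]
      calc s * (d'^2/d^2) ≤ ε * m * (d'^2/d^2) :=
            mul_le_mul_of_nonneg_right hsle (by positivity)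
        _ ≤ (ζ^2*d^2/2) * m * (d'^2/d^2) := by
            apply mul_le_mul_of_nonneg_right _ (by positivity)
            exact mul_le_mul_of_nonneg_right hεd (le_of_lt hmpos)
        _ = ζ^2 * d'^2 * m / 2 := by field_simp
    linarith
  -- Hall's condition
  have hall : ∀ S : Finset (Fin m),
      S.card ≤ (S.biUnion (fun u => univ.filter (fun b => G u b))).card := by
    intro S
    by_cases hScase : (S.card : ℝ) ≤ ε * m
    · exact expansion_small G hc hζ hd' hm1 hReg2a hReg3a (fun a => hMinA a) S
        (hsizekey _ (Nat.cast_nonneg _) hScase)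
    · push_neg at hScase
      -- regularity: the non-neighbourhood is small
      have hT : ((univ \ S.biUnion (fun u => univ.filter (fun b => G u b))).card : ℝ)
          < ε * m := by
        by_contra hcon
        push_neg at hcon
        have h0 := hReg1 S _ (le_of_lt hScase) hcon
        have hzero : eCnt G S (univ \ S.biUnion (fun u => univ.filter (fun b => G u b))) = 0 := by
          rw [eCnt, Finset.card_eq_zero, Finset.filter_eq_empty_iff]
          rintro ⟨u, v⟩ huv
          rw [Finset.mem_product] at huv
          obtain ⟨hu, hv⟩ := huv
          rw [Finset.mem_sdiff] at hv
          intro hGuv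
          exact hv.2 (Finset.mem_biUnion.mpr
            ⟨u, hu, Finset.mem_filter.mpr ⟨Finset.mem_univ _, hGuv⟩⟩)
        have hdens : dens G S (univ \ S.biUnion (fun u => univ.filter (fun b => G u b))) = 0 := by
          show ((eCnt G S _ : ℝ) / _) = 0
          rw [hzero]; simp
        rw [hdens] at h0
        nlinarith [h0.1]
      have hTexp := expansion_small (fun v a => G a v) hc hζ hd' hm1 hReg2b hReg3b
        (fun b => hMinB b) (univ \ S.biUnion (fun u => univ.filter (fun b => G u b)))
        (hsizekey _ (Nat.cast_nonneg _) (le_of_lt hT))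
      have hsub : (univ \ S.biUnion (fun u => univ.filter (fun b => G u b))).biUnion
          (fun v => univ.filter (fun a => G a v)) ⊆ univ \ S := by
        intro u hu
        rw [Finset.mem_biUnion] at hu
        obtain ⟨v, hv, hu'⟩ := hu
        rw [Finset.mem_filter] at hu'
        rw [Finset.mem_sdiff]
        refine ⟨Finset.mem_univ _, fun huS => ?_⟩
        rw [Finset.mem_sdiff] at hv
        exact hv.2 (Finset.mem_biUnion.mpr
          ⟨u, huS, Finset.mem_filter.mpr ⟨Finset.mem_univ _, hu'.2⟩⟩)
      have h1 := le_trans hTexp (Finset.card_le_card hsub)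
      have h2 : (univ \ S.biUnion (fun u => univ.filter (fun b => G u b))).card
          = m - (S.biUnion (fun u => univ.filter (fun b => G u b))).card := by
        rw [Finset.card_sdiff_of_subset (Finset.subset_univ _), Finset.card_univ, Fintype.card_fin]
      have h3 : (univ \ S).card = m - S.card := by
        rw [Finset.card_sdiff_of_subset (Finset.subset_univ _), Finset.card_univ, Fintype.card_fin]
      have h4 : S.card ≤ m := by
        calc S.card ≤ (univ : Finset (Fin m)).card := Finset.card_le_card (Finset.subset_univ _)
          _ = m := by rw [Finset.card_univ, Fintype.card_fin]
      have h5 : (S.biUnion (fun u => univ.filter (fun b => G u b))).card ≤ m := by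
        calc _ ≤ (univ : Finset (Fin m)).card := Finset.card_le_card (Finset.subset_univ _)
          _ = m := by rw [Finset.card_univ, Fintype.card_fin]
      omega
  obtain ⟨f, hfinj, hf⟩ := (Finset.all_card_le_biUnion_card_iff_exists_injective _).mp hall
  refine ⟨Equiv.ofBijective f ((Fintype.bijective_iff_injective_and_card f).mpr ⟨hfinj, rfl⟩),
    fun u => ?_⟩
  have := hf u
  rw [Finset.mem_filter] at this
  exact this.2
end

section
/- Let 0 < 1/m ≪ ε ≪ d < 1 and suppose 1/m ≪ 1/k. Let V₁,…,V_k be disjoint clusters of size m with directed cycle C = V₁…V_k, and let G be a digraph on V₁ ∪ … ∪ V_k such that G[Vᵢ, Vᵢ₊₁] is (ε,d)-superregular for every i. For each i, let Vᵢ¹ ⊆ Vᵢ and Vᵢ₊₁² ⊆ Vᵢ₊₁ be sets of size at least (1−d/2)m with |Vᵢ¹| = |Vᵢ₊₁²|. Suppose F is a 1-regular digraph containing V₁ ∪ … ∪ V_k in its vertex set such that F[Vᵢ¹, Vᵢ₊₁²] is a perfect matching for each i, and every cycle of F contains a vertex in some Vᵢ¹. Then one can replace each matching F[Vᵢ¹,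 Vᵢ₊₁²] with a suitable perfect matching in G[Vᵢ¹, Vᵢ₊₁²] so that the resulting 1-regular digraph is a single cycle on V(F). -/
open Finset
open scoped Classical

/-- `G` is an ε-regular bipartite graph (with vertex classes `A` and `B`). -/
def EpsRegularPair {A B : Type*} [Fintype A] [Fintype B] (G : A → B → Prop) (ε : ℝ) : Prop :=
  ∀ X : Finset A, ∀ Y : Finset B,
    ε * (Fintype.card A : ℝ) ≤ (X.card : ℝ) → ε * (Fintype.card B : ℝ) ≤ (Y.card : ℝ) →
    |dens G X Y - dens G Finset.univ Finset.univ| < ε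

/-- `G` is an (ε,d)-superregular bipartite graph: it is ε-regular and all degrees
are at least `(d-ε)` times the size of the opposite class. -/
def SuperRegularPair {A B : Type*} [Fintype A] [Fintype B] (G : A → B → Prop) (ε d : ℝ) : Prop :=
  EpsRegularPair G ε ∧
  (∀ a : A, (d - ε) * (Fintype.card B : ℝ) ≤ ((Finset.univ.filter (fun b => G a b)).card : ℝ)) ∧
  (∀ b : B, (d - ε) * (Fintype.card A : ℝ) ≤ ((Finset.univ.filter (fun a => G a b)).card : ℝ))

namespace S19

variable {α : Type*} {β : Type*}

/-- If `τ` agrees with the forward `σ`-path from `a` of length `n`, then `a` and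
`σ^n a` are on the same `τ`-cycle. -/
lemma sc_path (σ τ : Equiv.Perm α) (a : α) :
    ∀ n : ℕ, (∀ j, j < n → τ ((σ ^ j) a) = (σ ^ (j + 1)) a) →
      τ.SameCycle a ((σ ^ n) a) := by
  intro n
  induction n with
  | zero => intro _; simpa using Equiv.Perm.SameCycle.refl τ a
  | succ n ih =>
    intro h
    have h1 : τ.SameCycle a ((σ ^ n) a) := ih fun j hj => h j (Nat.lt_succ_of_lt hj)
    have h2 : τ.SameCycle ((σ ^ n) a) ((σ ^ (n + 1)) a) := by
      refine ⟨1, ?_⟩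
      simpa using h n (Nat.lt_succ_self n)
    exact h1.trans h2

/-- First-hit lemma: if `τ` agrees with `σ` off `M` and the forward `σ`-orbit of `a`
meets `M`, then some first hit point `z ∈ M` is on the same `τ`-cycle as `a`. -/
lemma reach (σ τ : Equiv.Perm α) (M : Set α)
    (hag : ∀ w, w ∉ M → τ w = σ w) (a : α)
    (hex : ∃ n : ℕ, (σ ^ n) a ∈ M) :
    ∃ n : ℕ, (σ ^ n) a ∈ M ∧ (∀ j, j < n → (σ ^ j) a ∉ M) ∧
      τ.SameCycle a ((σ ^ n) a) := by
  classical
  let n := Nat.find hex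
  refine ⟨n, Nat.find_spec hex, fun j hj => Nat.find_min hex hj, ?_⟩
  exact sc_path σ τ a n fun j hj => by
    rw [hag _ (Nat.find_min hex hj)]
    rw [← Equiv.Perm.mul_apply, ← pow_succ']

lemma pow_mul_fix (σ : Equiv.Perm α) (x : α) (ℓ : ℕ) (hret : (σ ^ ℓ) x = x) (q : ℕ) :
    (σ ^ (ℓ * q)) x = x := by
  induction q with
  | zero => simp
  | succ q ih => rw [Nat.mul_succ, pow_add, Equiv.Perm.mul_apply, hret, ih]

lemma pow_mod_fix (σ : Equiv.Perm α) (x : α) (ℓ : ℕ) (hret : (σ ^ ℓ) x = x) (n : ℕ) :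
    (σ ^ (n % ℓ)) x = (σ ^ n) x := by
  conv_rhs => rw [← Nat.mod_add_div n ℓ]
  rw [pow_add, Equiv.Perm.mul_apply, pow_mul_fix σ x ℓ hret]

/-- On a cycle of length `ℓ`, the exponent map is injective on `[0, ℓ)`. -/
lemma exp_inj (σ : Equiv.Perm α) (x : α) (ℓ : ℕ)
    (hmin : ∀ j, 0 < j → j < ℓ → (σ ^ j) x ≠ x)
    {a b : ℕ} (hab : a < b) (hb : b < ℓ) : (σ ^ a) x ≠ (σ ^ b) x := by
  intro h
  have h2 : (σ ^ a) ((σ ^ (b - a)) x) = (σ ^ a) x := by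
    rw [← Equiv.Perm.mul_apply, ← pow_add]
    rw [Nat.add_sub_cancel' (Nat.le_of_lt hab)] at *
    exact h.symm
  have h3 : (σ ^ (b - a)) x = x := (σ ^ a).injective h2
  exact hmin (b - a) (Nat.sub_pos_of_lt hab) (lt_of_le_of_lt (Nat.sub_le b a) hb) h3

/-- Selecting the top `L` elements of a finset according to an injective `ℕ`-valued key. -/
lemma exists_top (f : β → ℕ) :
    ∀ (L : ℕ) (T : Finset β), Set.InjOn f T → L ≤ T.card →
    ∃ Q ⊆ T, Q.card = L ∧ ∀ a ∈ T, a ∉ Q → ∀ b ∈ Q, f a < f b := by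
  intro L
  induction L with
  | zero => intro T _ _; exact ⟨∅, by simp⟩
  | succ L ih =>
    intro T hinj hL
    have hne : T.Nonempty := Finset.card_pos.mp (lt_of_lt_of_le (Nat.succ_pos L) hL)
    obtain ⟨b₀, hb₀T, hb₀max⟩ := Finset.exists_max_image T f hne
    have hcard : L ≤ (T.erase b₀).card := by
      rw [Finset.card_erase_of_mem hb₀T]; omega
    obtain ⟨Q', hQ'sub, hQ'card, hQ'top⟩ := ih (T.erase b₀)
      (hinj.mono (fun x hx => Finset.mem_of_mem_erase hx)) hcard
    have hb₀Q' : b₀ ∉ Q' := fun h => (Finset.mem_erase.mp (hQ'sub h)).1 rfl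
    refine ⟨insert b₀ Q', ?_, ?_, ?_⟩
    · intro x hx
      rcases Finset.mem_insert.mp hx with rfl | hx
      · exact hb₀T
      · exact Finset.mem_of_mem_erase (hQ'sub hx)
    · rw [Finset.card_insert_of_notMem hb₀Q', hQ'card]
    · intro a haT haQ b hbQ
      have haerase : a ∈ T.erase b₀ := Finset.mem_erase.mpr
        ⟨fun h => haQ (h ▸ Finset.mem_insert_self b₀ Q'), haT⟩
      rcases Finset.mem_insert.mp hbQ with rfl | hb
      · have hle : f a ≤ f b := hb₀max a haT
        have hne2 : f a ≠ f b := fun h =>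
          (Finset.mem_erase.mp haerase).1 (hinj haT hb₀T h)
        omega
      · exact hQ'top a haerase (fun h => haQ (Finset.mem_insert_of_mem h)) b hb

end S19

namespace S19

variable {α : Type*}

lemma exp_eq (σ : Equiv.Perm α) (x : α) (ℓ : ℕ)
    (hmin : ∀ j, 0 < j → j < ℓ → (σ ^ j) x ≠ x)
    {a b : ℕ} (ha : a < ℓ) (hb : b < ℓ) (h : (σ ^ a) x = (σ ^ b) x) : a = b := by
  rcases Nat.lt_trichotomy a b with hlt | heq | hgt
  · exact absurd h (exp_inj σ x ℓ hmin hlt hb)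
  · exact heq
  · exact absurd h.symm (exp_inj σ x ℓ hmin hgt ha)

/-- The first hit of the special set from exponent `s` is the next special exponent `t`. -/
lemma first_hit_exp (σ : Equiv.Perm α) (x₁ : α) (ℓ e₂ e₃ : ℕ)
    (hmin : ∀ j, 0 < j → j < ℓ → (σ ^ j) x₁ ≠ x₁) (hret : (σ ^ ℓ) x₁ = x₁)
    (h2 : 0 < e₂) (h23 : e₂ < e₃) (h3ℓ : e₃ < ℓ)
    (s t : ℕ) (hs : 0 < s) (hst : s ≤ t)
    (ht : t = e₂ ∨ t = e₃ ∨ t = ℓ)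
    (hno2 : s ≤ e₂ → t ≤ e₂) (hno3 : s ≤ e₃ → t ≤ e₃) (htl : t ≤ ℓ)
    (n : ℕ)
    (hnmem : (σ ^ n) ((σ ^ s) x₁) ∈ ({(σ ^ e₂) x₁, (σ ^ e₃) x₁, x₁} : Set α))
    (hnmin : ∀ j, j < n →
      (σ ^ j) ((σ ^ s) x₁) ∉ ({(σ ^ e₂) x₁, (σ ^ e₃) x₁, x₁} : Set α)) :
    (σ ^ n) ((σ ^ s) x₁) = (σ ^ t) x₁ := by
  have key : ∀ j : ℕ, (σ ^ j) ((σ ^ s) x₁) = (σ ^ (j + s)) x₁ := by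
    intro j; rw [pow_add, Equiv.Perm.mul_apply]
  -- there is a hit at time t - s
  have hhit : (σ ^ (t - s)) ((σ ^ s) x₁) ∈ ({(σ ^ e₂) x₁, (σ ^ e₃) x₁, x₁} : Set α) := by
    rw [key, Nat.sub_add_cancel hst]
    rcases ht with rfl | rfl | rfl
    · left; rfl
    · right; left; rfl
    · right; right; exact hret
  have hnle : n ≤ t - s := by
    by_contra hc
    exact hnmin (t - s) (Nat.lt_of_not_le hc) hhit
  have hu : n + s ≤ t := by omega
  rw [key] at hnmem ⊢
  set u := n + s with hu_def
  have hus : 0 < u := by omega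
  have hul : u ≤ ℓ := le_trans hu htl
  -- identify the hit
  rcases hnmem with hz | hz | hz
  · -- z = x₂
    rcases Nat.lt_or_ge u ℓ with hulℓ | hge
    · have := exp_eq σ x₁ ℓ hmin hulℓ (lt_trans h23 h3ℓ) hz
      have ht2 : t ≤ e₂ := hno2 (by omega)
      have : u = t := by omega
      rw [this]
    · have huℓ : u = ℓ := by omega
      rw [huℓ, hret] at hz
      exact absurd hz.symm (hmin e₂ h2 (lt_trans h23 h3ℓ))
  · -- z = x₃
    rcases Nat.lt_or_ge u ℓ with hulℓ | hge
    · have := exp_eq σ x₁ ℓ hmin hulℓ h3ℓ hz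
      have ht3 : t ≤ e₃ := hno3 (by omega)
      have : u = t := by omega
      rw [this]
    · have huℓ : u = ℓ := by omega
      rw [huℓ, hret] at hz
      exact absurd hz.symm (hmin e₃ (by omega) h3ℓ)
  · -- z = x₁
    rcases Nat.lt_or_ge u ℓ with hulℓ | hge
    · exact absurd hz (hmin u hus hulℓ)
    · have huℓ : u = ℓ := by omega
      have htt : t = ℓ := by omega
      rw [huℓ, htt]

end S19

namespace S19

variable {A B : Type*} [Fintype A] [Fintype B] (g : A → B → Prop)

lemma eCnt_left (X : Finset A) (Y : Finset B) :
    eCnt g X Y = ∑ a ∈ X, (Y.filter (g a)).card := by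
  rw [eCnt, Finset.card_eq_sum_card_fiberwise
    (f := Prod.fst) (t := X) (fun p hp => (Finset.mem_product.mp (Finset.mem_filter.mp hp).1).1)]
  refine Finset.sum_congr rfl fun a ha => ?_
  congr 1
  apply Finset.card_bij (fun p _ => p.2)
  · intro p hp
    simp only [Finset.mem_filter, Finset.mem_product] at hp
    obtain ⟨⟨⟨_, hy⟩, hg⟩, hfst⟩ := hp
    subst hfst
    exact Finset.mem_filter.mpr ⟨hy, hg⟩
  · intro p hp q hq hpq
    simp only [Finset.mem_filter, Finset.mem_product] at hp hq
    exact Prod.ext (hp.2.trans hq.2.symm) hpq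
  · intro b hb
    simp only [Finset.mem_filter] at hb
    exact ⟨(a, b), by simp [Finset.mem_filter, Finset.mem_product, ha, hb.1, hb.2], rfl⟩

lemma eCnt_right (X : Finset A) (Y : Finset B) :
    eCnt g X Y = ∑ b ∈ Y, (X.filter (fun a => g a b)).card := by
  rw [eCnt, Finset.card_eq_sum_card_fiberwise
    (f := Prod.snd) (t := Y) (fun p hp => (Finset.mem_product.mp (Finset.mem_filter.mp hp).1).2)]
  refine Finset.sum_congr rfl fun b hb => ?_
  congr 1
  apply Finset.card_bij (fun p _ => p.1)
  · intro p hp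
    simp only [Finset.mem_filter, Finset.mem_product] at hp
    obtain ⟨⟨⟨hx, _⟩, hg⟩, hsnd⟩ := hp
    subst hsnd
    exact Finset.mem_filter.mpr ⟨hx, hg⟩
  · intro p hp q hq hpq
    simp only [Finset.mem_filter, Finset.mem_product] at hp hq
    exact Prod.ext hpq (hp.2.trans hq.2.symm)
  · intro a ha
    simp only [Finset.mem_filter] at ha
    exact ⟨(a, b), by simp [Finset.mem_filter, Finset.mem_product, hb, ha.1, ha.2], rfl⟩

variable {g} {ε d : ℝ}

section FinM
variable {m : ℕ} {g : Fin m → Fin m → Prop}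

/-- density of the whole pair is at least `d - ε`. -/
lemma dens_univ_ge (hm : 0 < m)
    (hdeg : ∀ a : Fin m, (d - ε) * m ≤ ((Finset.univ.filter (fun b => g a b)).card : ℝ)) :
    d - ε ≤ dens g Finset.univ Finset.univ := by
  have hec : ((d - ε) * m) * m ≤ (eCnt g Finset.univ Finset.univ : ℝ) := by
    rw [eCnt_left]
    push_cast
    calc ((d - ε) * m) * m = ∑ _a : Fin m, (d - ε) * m := by
          simp [Finset.sum_const, Finset.card_univ]; ring
      _ ≤ ∑ a : Fin m, ((Finset.univ.filter (fun b => g a b)).card : ℝ) :=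
          Finset.sum_le_sum fun a _ => hdeg a
  have key : dens g Finset.univ Finset.univ
      = (eCnt g Finset.univ Finset.univ : ℝ) / ((m : ℝ) * m) := by
    have : dens g (Finset.univ : Finset (Fin m)) Finset.univ
        = (eCnt g Finset.univ Finset.univ : ℝ)
          / (((Finset.univ : Finset (Fin m)).card : ℝ) * ((Finset.univ : Finset (Fin m)).card : ℝ)) := rfl
    rw [this, Finset.card_univ, Fintype.card_fin]
  rw [key, le_div_iff₀ (by positivity)]
  linarith

lemma eCnt_ge_of_reg (hm : 0 < m) (hε : 0 < ε)
    (hreg : EpsRegularPair g ε)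
    (hdeg : ∀ a : Fin m, (d - ε) * m ≤ ((Finset.univ.filter (fun b => g a b)).card : ℝ))
    {X Y : Finset (Fin m)} (hX : ε * m ≤ (X.card : ℝ)) (hY : ε * m ≤ (Y.card : ℝ)) :
    (d - 2 * ε) * ((X.card : ℝ) * (Y.card : ℝ)) ≤ (eCnt g X Y : ℝ) := by
  have hXpos : (0 : ℝ) < X.card := lt_of_lt_of_le (by positivity) hX
  have hYpos : (0 : ℝ) < Y.card := lt_of_lt_of_le (by positivity) hY
  have h1 := hreg X Y (by rwa [Fintype.card_fin]) (by rwa [Fintype.card_fin])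
  have h2 := dens_univ_ge hm hdeg
  have h3 : d - 2 * ε < dens g X Y := by
    have := abs_lt.mp h1
    linarith [this.1]
  have key : dens g X Y = (eCnt g X Y : ℝ) / ((X.card : ℝ) * (Y.card : ℝ)) := rfl
  rw [key, lt_div_iff₀ (by positivity)] at h3
  nlinarith [h3]

lemma exists_edge (hm : 0 < m) (hε : 0 < ε) (hd2 : 2 * ε < d)
    (hreg : EpsRegularPair g ε)
    (hdeg : ∀ a : Fin m, (d - ε) * m ≤ ((Finset.univ.filter (fun b => g a b)).card : ℝ))
    {X Y : Finset (Fin m)} (hX : ε * m ≤ (X.card : ℝ)) (hY : ε * m ≤ (Y.card : ℝ)) :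
    ∃ a ∈ X, ∃ b ∈ Y, g a b := by
  have h := eCnt_ge_of_reg hm hε hreg hdeg hX hY
  have hXpos : (0 : ℝ) < X.card := lt_of_lt_of_le (by positivity) hX
  have hYpos : (0 : ℝ) < Y.card := lt_of_lt_of_le (by positivity) hY
  have hpos : (0 : ℝ) < (eCnt g X Y : ℝ) :=
    lt_of_lt_of_le (mul_pos (by linarith) (by positivity)) h
  have : ((X ×ˢ Y).filter (fun p => g p.1 p.2)).Nonempty := by
    rw [← Finset.card_pos]
    exact_mod_cast hpos
  obtain ⟨p, hp⟩ := this
  simp only [Finset.mem_filter, Finset.mem_product] at hp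
  exact ⟨p.1, hp.1.1, p.2, hp.1.2, hp.2⟩

/-- out-degree bad set is small -/
lemma badset_out (hm : 0 < m) (hε : 0 < ε)
    (hreg : EpsRegularPair g ε)
    (hdeg : ∀ a : Fin m, (d - ε) * m ≤ ((Finset.univ.filter (fun b => g a b)).card : ℝ))
    {Y : Finset (Fin m)} (hY : ε * m ≤ (Y.card : ℝ)) :
    ((Finset.univ.filter (fun a : Fin m =>
      ((Y.filter (g a)).card : ℝ) < (d - 2 * ε) * (Y.card : ℝ))).card : ℝ) < ε * m := by
  by_contra hc
  push_neg at hc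
  set Bad := Finset.univ.filter (fun a : Fin m =>
      ((Y.filter (g a)).card : ℝ) < (d - 2 * ε) * (Y.card : ℝ)) with hBad
  have h := eCnt_ge_of_reg hm hε hreg hdeg hc hY
  have hBne : Bad.Nonempty := by
    rw [← Finset.card_pos]
    have : (0:ℝ) < Bad.card := lt_of_lt_of_le (by positivity) hc
    exact_mod_cast this
  have hlt : (eCnt g Bad Y : ℝ) < (d - 2 * ε) * ((Bad.card : ℝ) * (Y.card : ℝ)) := by
    rw [eCnt_left]
    push_cast
    calc ∑ a ∈ Bad, ((Y.filter (g a)).card : ℝ)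
        < ∑ _a ∈ Bad, (d - 2 * ε) * (Y.card : ℝ) := by
          apply Finset.sum_lt_sum_of_nonempty hBne
          intro a ha
          exact (Finset.mem_filter.mp ha).2
      _ = (d - 2 * ε) * ((Bad.card : ℝ) * (Y.card : ℝ)) := by
          rw [Finset.sum_const]; push_cast; ring
  linarith

/-- in-degree bad set is small -/
lemma badset_in (hm : 0 < m) (hε : 0 < ε)
    (hreg : EpsRegularPair g ε)
    (hdeg : ∀ a : Fin m, (d - ε) * m ≤ ((Finset.univ.filter (fun b => g a b)).card : ℝ))
    {X : Finset (Fin m)} (hX : ε * m ≤ (X.card : ℝ)) :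
    ((Finset.univ.filter (fun b : Fin m =>
      ((X.filter (fun a => g a b)).card : ℝ) < (d - 2 * ε) * (X.card : ℝ))).card : ℝ) < ε * m := by
  by_contra hc
  push_neg at hc
  set Bad := Finset.univ.filter (fun b : Fin m =>
      ((X.filter (fun a => g a b)).card : ℝ) < (d - 2 * ε) * (X.card : ℝ)) with hBad
  have h := eCnt_ge_of_reg hm hε hreg hdeg hX hc
  have hBne : Bad.Nonempty := by
    rw [← Finset.card_pos]
    have : (0:ℝ) < Bad.card := lt_of_lt_of_le (by positivity) hc
    exact_mod_cast this
  have hlt : (eCnt g X Bad : ℝ) < (d - 2 * ε) * ((X.card : ℝ) * (Bad.card : ℝ)) := by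
    rw [eCnt_right]
    push_cast
    calc ∑ b ∈ Bad, ((X.filter (fun a => g a b)).card : ℝ)
        < ∑ _b ∈ Bad, (d - 2 * ε) * (X.card : ℝ) := by
          apply Finset.sum_lt_sum_of_nonempty hBne
          intro b hb
          exact (Finset.mem_filter.mp hb).2
      _ = (d - 2 * ε) * ((X.card : ℝ) * (Bad.card : ℝ)) := by
          rw [Finset.sum_const]; push_cast; ring
  linarith

/-- min-degree into a subset -/
lemma deg_into (a : Fin m)
    (hdeg : ∀ a : Fin m, (d - ε) * m ≤ ((Finset.univ.filter (fun b => g a b)).card : ℝ))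
    (Y : Finset (Fin m)) :
    (d - ε) * m - (m - (Y.card : ℝ)) ≤ ((Y.filter (g a)).card : ℝ) := by
  have hsub : Finset.univ.filter (fun b => g a b) ⊆ (Y.filter (g a)) ∪ Yᶜ := by
    intro b hb
    by_cases h : b ∈ Y
    · exact Finset.mem_union_left _ (Finset.mem_filter.mpr ⟨h, (Finset.mem_filter.mp hb).2⟩)
    · exact Finset.mem_union_right _ (Finset.mem_compl.mpr h)
  have h1 : ((Finset.univ.filter (fun b => g a b)).card : ℝ)
      ≤ ((Y.filter (g a)).card : ℝ) + ((Yᶜ : Finset (Fin m)).card : ℝ) := by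
    calc ((Finset.univ.filter (fun b => g a b)).card : ℝ)
        ≤ (((Y.filter (g a)) ∪ Yᶜ).card : ℝ) := by exact_mod_cast Finset.card_le_card hsub
      _ ≤ _ := by exact_mod_cast Finset.card_union_le _ _
  have h2 : ((Yᶜ : Finset (Fin m)).card : ℝ) = m - (Y.card : ℝ) := by
    rw [Finset.card_compl, Fintype.card_fin]
    have h3 : Y.card ≤ m := by simpa using Finset.card_le_univ Y
    rw [Nat.cast_sub h3]
  have := hdeg a
  linarith

lemma deg_into_in (b : Fin m)
    (hdegin : ∀ b : Fin m, (d - ε) * m ≤ ((Finset.univ.filter (fun a => g a b)).card : ℝ))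
    (X : Finset (Fin m)) :
    (d - ε) * m - (m - (X.card : ℝ)) ≤ ((X.filter (fun a => g a b)).card : ℝ) := by
  have hsub : Finset.univ.filter (fun a => g a b) ⊆ (X.filter (fun a => g a b)) ∪ Xᶜ := by
    intro a ha
    by_cases h : a ∈ X
    · exact Finset.mem_union_left _ (Finset.mem_filter.mpr ⟨h, (Finset.mem_filter.mp ha).2⟩)
    · exact Finset.mem_union_right _ (Finset.mem_compl.mpr h)
  have h1 : ((Finset.univ.filter (fun a => g a b)).card : ℝ)
      ≤ ((X.filter (fun a => g a b)).card : ℝ) + ((Xᶜ : Finset (Fin m)).card : ℝ) := by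
    calc ((Finset.univ.filter (fun a => g a b)).card : ℝ)
        ≤ (((X.filter (fun a => g a b)) ∪ Xᶜ).card : ℝ) := by
          exact_mod_cast Finset.card_le_card hsub
      _ ≤ _ := by exact_mod_cast Finset.card_union_le _ _
  have h2 : ((Xᶜ : Finset (Fin m)).card : ℝ) = m - (X.card : ℝ) := by
    rw [Finset.card_compl, Fintype.card_fin]
    have h3 : X.card ≤ m := by simpa using Finset.card_le_univ X
    rw [Nat.cast_sub h3]
  have := hdegin b
  linarith

end FinM


section FinM
variable {m : ℕ} {g : Fin m → Fin m → Prop} {ε d : ℝ}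

/-- Perfect matching in a superregular pair between large equal-size subsets. -/
lemma exists_matching (hm : 0 < m) (hε : 0 < ε) (hd : 0 < d) (hd1 : d < 1)
    (hεd : ε ≤ d / 8) (hεm : 1 ≤ ε * m)
    (hreg : EpsRegularPair g ε)
    (hdeg : ∀ a : Fin m, (d - ε) * m ≤ ((Finset.univ.filter (fun b => g a b)).card : ℝ))
    (hdegin : ∀ b : Fin m, (d - ε) * m ≤ ((Finset.univ.filter (fun a => g a b)).card : ℝ))
    {A1 B1 : Finset (Fin m)}
    (hA1 : (1 - d / 2) * m ≤ (A1.card : ℝ)) (hB1 : (1 - d / 2) * m ≤ (B1.card : ℝ))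
    (hAB : A1.card = B1.card) :
    ∃ M : Fin m → Fin m, (∀ u ∈ A1, M u ∈ B1 ∧ g u (M u)) ∧
      Set.InjOn M A1 ∧ A1.image M = B1 := by
  have hd2 : 2 * ε < d := by linarith
  -- min degree into B1 / from B1
  have hdegB : ∀ a : Fin m, (d / 2 - ε) * m ≤ ((B1.filter (g a)).card : ℝ) := by
    intro a
    have := deg_into (d := d) (ε := ε) a hdeg B1
    nlinarith [this]
  have hdegA : ∀ b : Fin m, (d / 2 - ε) * m ≤ ((A1.filter (fun a => g a b)).card : ℝ) := by
    intro b
    have := deg_into_in (d := d) (ε := ε) b hdegin A1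
    nlinarith [this]
  -- Hall condition
  have hall : ∀ s : Finset {x // x ∈ A1},
      s.card ≤ (s.biUnion (fun u => B1.filter (g u.val))).card := by
    intro s
    rcases s.eq_empty_or_nonempty with rfl | hsne
    · simp
    set N := s.biUnion (fun u => B1.filter (g u.val)) with hN
    set S := s.image Subtype.val with hS
    have hScard : S.card = s.card := Finset.card_image_of_injective s Subtype.val_injective
    have hSsub : S ⊆ A1 := by
      intro a ha
      obtain ⟨u, _, rfl⟩ := Finset.mem_image.mp ha
      exact u.2
    have hNsub : N ⊆ B1 := by
      intro b hb
      obtain ⟨u, _, hmem⟩ := Finset.mem_biUnion.mp hb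
      exact (Finset.mem_filter.mp hmem).1
    rcases le_or_gt (s.card : ℝ) ((d / 2 - ε) * m) with hsmall | hbig
    · -- small case: one neighborhood suffices
      obtain ⟨u, hu⟩ := hsne
      have h1 : (B1.filter (g u.val)) ⊆ N := fun b hb =>
        Finset.mem_biUnion.mpr ⟨u, hu, hb⟩
      have h2 := hdegB u.val
      have h3 : ((B1.filter (g u.val)).card : ℝ) ≤ (N.card : ℝ) :=
        Nat.cast_le.mpr (Finset.card_le_card h1)
      exact_mod_cast le_trans hsmall (le_trans h2 h3)
    rcases le_or_gt (s.card : ℝ) ((B1.card : ℝ) - ε * m) with hmid | hlarge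
    · -- middle case: complement of N in B1 is small
      have hcompl : ((B1 \ N).card : ℝ) < ε * m := by
        by_contra hc
        push_neg at hc
        have hX : ε * m ≤ (S.card : ℝ) := by
          rw [hScard]
          calc ε * m ≤ (d / 2 - ε) * m := by nlinarith
            _ ≤ (s.card : ℝ) := le_of_lt hbig
        obtain ⟨a, haS, b, hbY, hgab⟩ := exists_edge hm hε hd2 hreg hdeg hX hc
        have hbB1 : b ∈ B1 := (Finset.mem_sdiff.mp hbY).1
        have hbN : b ∈ N := by
          obtain ⟨u, hus, rfl⟩ := Finset.mem_image.mp haS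
          exact Finset.mem_biUnion.mpr ⟨u, hus, Finset.mem_filter.mpr ⟨hbB1, hgab⟩⟩
        exact (Finset.mem_sdiff.mp hbY).2 hbN
      have h4 : (B1.card : ℝ) - (N.card : ℝ) ≤ ((B1 \ N).card : ℝ) := by
        have h4' := Finset.card_le_card_sdiff_add_card (s := B1) (t := N)
        have h4'' : (B1.card : ℝ) ≤ ((B1 \ N).card : ℝ) + (N.card : ℝ) := by
          exact_mod_cast h4'
        linarith
      have : (s.card : ℝ) ≤ (N.card : ℝ) := by linarith
      exact_mod_cast this
    · -- large case: N = B1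
      have hNB : N = B1 := by
        apply Finset.Subset.antisymm hNsub
        intro b hb
        have h5 := hdegA b
        -- A1 \ S is small
        have h6 : ((A1 \ S).card : ℝ) < ε * m := by
          have h7 : ((A1 \ S).card : ℝ) ≤ (A1.card : ℝ) - (S.card : ℝ) := by
            rw [Finset.card_sdiff_of_subset hSsub, Nat.cast_sub (Finset.card_le_card hSsub)]
          rw [hScard] at h7
          have : (A1.card : ℝ) = (B1.card : ℝ) := by exact_mod_cast hAB
          linarith
        -- some neighbor of b in S
        have h8 : ((A1.filter (fun a => g a b)) ∩ S).Nonempty := by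
          rw [← Finset.card_pos]
          have h9 : ((A1.filter (fun a => g a b)).card : ℝ)
              ≤ (((A1.filter (fun a => g a b)) ∩ S).card : ℝ) + ((A1 \ S).card : ℝ) := by
            have hsub2 : A1.filter (fun a => g a b)
                ⊆ ((A1.filter (fun a => g a b)) ∩ S) ∪ (A1 \ S) := by
              intro a ha
              by_cases haS : a ∈ S
              · exact Finset.mem_union_left _ (Finset.mem_inter.mpr ⟨ha, haS⟩)
              · exact Finset.mem_union_right _
                  (Finset.mem_sdiff.mpr ⟨(Finset.mem_filter.mp ha).1, haS⟩)
            calc ((A1.filter (fun a => g a b)).card : ℝ)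
                ≤ ((((A1.filter (fun a => g a b)) ∩ S) ∪ (A1 \ S)).card : ℝ) := by
                  exact_mod_cast Finset.card_le_card hsub2
              _ ≤ _ := by exact_mod_cast Finset.card_union_le _ _
          have h10 : (0:ℝ) < (((A1.filter (fun a => g a b)) ∩ S).card : ℝ) := by
            nlinarith
          exact_mod_cast h10
        obtain ⟨a, ha⟩ := h8
        obtain ⟨hafil, haS⟩ := Finset.mem_inter.mp ha
        obtain ⟨u, hus, rfl⟩ := Finset.mem_image.mp haS
        exact Finset.mem_biUnion.mpr
          ⟨u, hus, Finset.mem_filter.mpr ⟨hb, (Finset.mem_filter.mp hafil).2⟩⟩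
      rw [hNB]
      calc s.card = S.card := hScard.symm
        _ ≤ A1.card := Finset.card_le_card hSsub
        _ = B1.card := hAB
  obtain ⟨f, hfinj, hfmem⟩ :=
    (Finset.all_card_le_biUnion_card_iff_existsInjective'
      (t := fun u : {x // x ∈ A1} => B1.filter (g u.val))).mp hall
  classical
  set M : Fin m → Fin m := fun u => if h : u ∈ A1 then f ⟨u, h⟩ else u with hM
  have hMmem : ∀ u ∈ A1, M u ∈ B1 ∧ g u (M u) := by
    intro u hu
    have := hfmem ⟨u, hu⟩
    rw [Finset.mem_filter] at this
    simp only [hM, dif_pos hu]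
    exact this
  have hMinj : Set.InjOn M A1 := by
    intro a ha b hb hab
    simp only [hM] at hab
    rw [dif_pos (Finset.mem_coe.mp ha), dif_pos (Finset.mem_coe.mp hb)] at hab
    exact Subtype.ext_iff.mp (hfinj hab)
  refine ⟨M, hMmem, hMinj, ?_⟩
  apply Finset.eq_of_subset_of_card_le
  · intro b hb
    obtain ⟨u, hu, rfl⟩ := Finset.mem_image.mp hb
    exact (hMmem u hu).1
  · rw [Finset.card_image_of_injOn hMinj, hAB]

end FinM

end S19

namespace S19

section Moves
variable {W : Type*} [Fintype W]

lemma sameCycle_pow (P : Equiv.Perm W) (a : W) (n : ℕ) : P.SameCycle a ((P ^ n) a) :=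
  ⟨(n : ℤ), by rw [zpow_natCast]⟩

/-- Class-growing core: every old-class member joins `x` in the modified permutation. -/
lemma classgrow (P F'' : Equiv.Perm W) (w₀ x : W) (Mset : Set W)
    (hag : ∀ w, w ∉ Mset → F'' w = P w) (hxM : x ∈ Mset) (hxCL : P.SameCycle w₀ x)
    (hMC : ∀ z ∈ Mset, P.SameCycle w₀ z → z = x) :
    ∀ w, P.SameCycle w₀ w → F''.SameCycle w x := by
  intro w hw
  have hwx : P.SameCycle w x := hw.symm.trans hxCL
  obtain ⟨n, _, hn⟩ := hwx.exists_pow_eq'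
  obtain ⟨n', hmem, _, hsc⟩ := reach P F'' Mset hag w ⟨n, by rw [hn]; exact hxM⟩
  have hz : P.SameCycle w₀ ((P ^ n') w) := hw.trans (sameCycle_pow P w n')
  rw [hMC _ hmem hz] at hsc
  exact hsc

/-- The 2/3-rotation move. -/
lemma mod3 (P : Equiv.Perm W) (w₀ x x₁ x₂ : W)
    (hxCL : P.SameCycle w₀ x) (h1 : ¬ P.SameCycle w₀ x₁) (h2 : ¬ P.SameCycle w₀ x₂) :
    ∃ F'' : Equiv.Perm W,
      F'' x = P x₁ ∧
      (x₁ ≠ x₂ → F'' x₁ = P x₂) ∧ (x₁ = x₂ → F'' x₁ = P x) ∧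
      F'' x₂ = P x ∧
      (∀ w, w ≠ x → w ≠ x₁ → w ≠ x₂ → F'' w = P w) ∧
      (∀ w, P.SameCycle w₀ w → F''.SameCycle w₀ w) ∧
      F''.SameCycle w₀ x₂ := by
  have hxx1 : x ≠ x₁ := fun h => h1 (h ▸ hxCL)
  have hxx2 : x ≠ x₂ := fun h => h2 (h ▸ hxCL)
  set F'' := P * (Equiv.swap x x₁ * Equiv.swap x₁ x₂) with hF''
  have evx : F'' x = P x₁ := by
    simp only [hF'', Equiv.Perm.mul_apply]
    rw [Equiv.swap_apply_of_ne_of_ne hxx1 hxx2, Equiv.swap_apply_left]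
  have evx2 : F'' x₂ = P x := by
    simp only [hF'', Equiv.Perm.mul_apply]
    rw [Equiv.swap_apply_right, Equiv.swap_apply_right]
  have evx1a : x₁ ≠ x₂ → F'' x₁ = P x₂ := by
    intro hne
    simp only [hF'', Equiv.Perm.mul_apply]
    rw [Equiv.swap_apply_left, Equiv.swap_apply_of_ne_of_ne (Ne.symm hxx2) (Ne.symm hne)]
  have evx1b : x₁ = x₂ → F'' x₁ = P x := by
    intro heq
    subst heq
    simp only [hF'', Equiv.Perm.mul_apply]
    rw [Equiv.swap_self]
    simp only [Equiv.coe_refl, id_eq]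
    rw [Equiv.swap_apply_right]
  have evoth : ∀ w, w ≠ x → w ≠ x₁ → w ≠ x₂ → F'' w = P w := by
    intro w hw hw1 hw2
    simp only [hF'', Equiv.Perm.mul_apply]
    rw [Equiv.swap_apply_of_ne_of_ne hw1 hw2, Equiv.swap_apply_of_ne_of_ne hw hw1]
  have hag : ∀ w, w ∉ ({x, x₁, x₂} : Set W) → F'' w = P w := by
    intro w hw
    simp only [Set.mem_insert_iff, Set.mem_singleton_iff] at hw
    push_neg at hw
    exact evoth w hw.1 hw.2.1 hw.2.2
  have hMC : ∀ z ∈ ({x, x₁, x₂} : Set W), P.SameCycle w₀ z → z = x := by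
    intro z hz hzCL
    rcases hz with rfl | rfl | rfl
    · rfl
    · exact absurd hzCL h1
    · exact absurd hzCL h2
  have hgrow := classgrow P F'' w₀ x ({x, x₁, x₂} : Set W) hag (Set.mem_insert x _) hxCL hMC
  have hPxCL : P.SameCycle w₀ (P x) := (Equiv.Perm.sameCycle_apply_right).mpr hxCL
  have hx2join : F''.SameCycle w₀ x₂ := by
    have l1 : F''.SameCycle w₀ x := hgrow w₀ (Equiv.Perm.SameCycle.refl P w₀)
    have l2 : F''.SameCycle (P x) x := hgrow (P x) hPxCL
    have l3 : F''.SameCycle x₂ (P x) := ⟨1, by simpa using evx2⟩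
    exact (l1.trans l2.symm).trans l3.symm
  refine ⟨F'', evx, evx1a, evx1b, evx2, evoth, ?_, hx2join⟩
  intro w hw
  exact (hgrow w₀ (Equiv.Perm.SameCycle.refl P w₀)).trans (hgrow w hw).symm

/-- The 4-rotation absorbing move. -/
lemma mod4 (P : Equiv.Perm W) (w₀ zs x₁ : W) (ℓ e₂ e₃ : ℕ)
    (hret : (P ^ ℓ) x₁ = x₁) (hmin : ∀ j, 0 < j → j < ℓ → (P ^ j) x₁ ≠ x₁)
    (h2 : 0 < e₂) (h23 : e₂ < e₃) (h3ℓ : e₃ < ℓ)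
    (hx₁CL : P.SameCycle w₀ x₁) (hzCL : ¬ P.SameCycle w₀ zs) :
    ∃ F'' : Equiv.Perm W,
      F'' zs = P x₁ ∧
      F'' x₁ = P ((P ^ e₂) x₁) ∧
      F'' ((P ^ e₂) x₁) = P ((P ^ e₃) x₁) ∧
      F'' ((P ^ e₃) x₁) = P zs ∧
      (∀ w, w ≠ zs → w ≠ x₁ → w ≠ (P ^ e₂) x₁ → w ≠ (P ^ e₃) x₁ → F'' w = P w) ∧
      (∀ w, P.SameCycle w₀ w → F''.SameCycle w₀ w) ∧
      F''.SameCycle w₀ zs := by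
  set x₂ := (P ^ e₂) x₁ with hx₂
  set x₃ := (P ^ e₃) x₁ with hx₃
  have hx₂CL : P.SameCycle w₀ x₂ := hx₁CL.trans (sameCycle_pow P x₁ e₂)
  have hx₃CL : P.SameCycle w₀ x₃ := hx₁CL.trans (sameCycle_pow P x₁ e₃)
  have h12 : x₁ ≠ x₂ := by
    intro h
    exact hmin e₂ h2 (lt_trans h23 h3ℓ) h.symm
  have h13 : x₁ ≠ x₃ := by
    intro h
    exact hmin e₃ (lt_trans h2 h23) h3ℓ h.symm
  have h23' : x₂ ≠ x₃ := exp_inj P x₁ ℓ hmin h23 h3ℓ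
  have hz1 : zs ≠ x₁ := fun h => hzCL (h ▸ hx₁CL)
  have hz2 : zs ≠ x₂ := fun h => hzCL (h ▸ hx₂CL)
  have hz3 : zs ≠ x₃ := fun h => hzCL (h ▸ hx₃CL)
  set F'' := P * (Equiv.swap zs x₁ * (Equiv.swap x₁ x₂ * Equiv.swap x₂ x₃)) with hF''
  have evz : F'' zs = P x₁ := by
    simp only [hF'', Equiv.Perm.mul_apply]
    rw [Equiv.swap_apply_of_ne_of_ne hz2 hz3, Equiv.swap_apply_of_ne_of_ne hz1 hz2,
      Equiv.swap_apply_left]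
  have ev1 : F'' x₁ = P x₂ := by
    simp only [hF'', Equiv.Perm.mul_apply]
    rw [Equiv.swap_apply_of_ne_of_ne h12 h13, Equiv.swap_apply_left,
      Equiv.swap_apply_of_ne_of_ne (Ne.symm hz2) (Ne.symm h12)]
  have ev2 : F'' x₂ = P x₃ := by
    simp only [hF'', Equiv.Perm.mul_apply]
    rw [Equiv.swap_apply_left, Equiv.swap_apply_of_ne_of_ne (Ne.symm h13) (Ne.symm h23'),
      Equiv.swap_apply_of_ne_of_ne (Ne.symm hz3) (Ne.symm h13)]
  have ev3 : F'' x₃ = P zs := by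
    simp only [hF'', Equiv.Perm.mul_apply]
    rw [Equiv.swap_apply_right, Equiv.swap_apply_right, Equiv.swap_apply_right]
  have evoth : ∀ w, w ≠ zs → w ≠ x₁ → w ≠ x₂ → w ≠ x₃ → F'' w = P w := by
    intro w hw hw1 hw2 hw3
    simp only [hF'', Equiv.Perm.mul_apply]
    rw [Equiv.swap_apply_of_ne_of_ne hw2 hw3, Equiv.swap_apply_of_ne_of_ne hw1 hw2,
      Equiv.swap_apply_of_ne_of_ne hw hw1]
  set M4 : Set W := {zs, x₁, x₂, x₃} with hM4
  have hag : ∀ w, w ∉ M4 → F'' w = P w := by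
    intro w hw
    simp only [hM4, Set.mem_insert_iff, Set.mem_singleton_iff] at hw
    push_neg at hw
    exact evoth w hw.1 hw.2.1 hw.2.2.1 hw.2.2.2
  -- first hits within the class identify the next special point
  have hit : ∀ s t : ℕ, 0 < s → s ≤ t → (t = e₂ ∨ t = e₃ ∨ t = ℓ) →
      (s ≤ e₂ → t ≤ e₂) → (s ≤ e₃ → t ≤ e₃) → t ≤ ℓ →
      F''.SameCycle ((P ^ s) x₁) ((P ^ t) x₁) := by
    intro s t hs hst ht hno2 hno3 htl
    have hexhit : ∃ n : ℕ, (P ^ n) ((P ^ s) x₁) ∈ M4 := by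
      refine ⟨t - s, ?_⟩
      rw [← Equiv.Perm.mul_apply, ← pow_add, Nat.sub_add_cancel hst]
      rcases ht with rfl | rfl | rfl
      · right; right; left; exact hx₂.symm
      · right; right; right; exact hx₃.symm ▸ rfl
      · right; left; exact hret
    obtain ⟨n, hnmem, hnmin, hsc⟩ := reach P F'' M4 hag ((P ^ s) x₁) hexhit
    have hsCL : P.SameCycle w₀ ((P ^ s) x₁) := hx₁CL.trans (sameCycle_pow P x₁ s)
    have hzne : (P ^ n) ((P ^ s) x₁) ≠ zs := by
      intro h
      exact hzCL (h ▸ (hsCL.trans (sameCycle_pow P ((P ^ s) x₁) n)))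
    have hnmem3 : (P ^ n) ((P ^ s) x₁) ∈ ({(P ^ e₂) x₁, (P ^ e₃) x₁, x₁} : Set W) := by
      rcases hnmem with h | h | h | h
      · exact absurd h hzne
      · right; right; exact h
      · left; exact h
      · right; left; exact h
    have hnmin3 : ∀ j, j < n →
        (P ^ j) ((P ^ s) x₁) ∉ ({(P ^ e₂) x₁, (P ^ e₃) x₁, x₁} : Set W) := by
      intro j hj hmem
      apply hnmin j hj
      rcases hmem with h | h | h
      · right; right; left; exact h
      · right; right; right; exact h
      · right; left; exact h
    have := first_hit_exp P x₁ ℓ e₂ e₃ hmin hret h2 h23 h3ℓ s t hs hst ht hno2 hno3 htl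
      n hnmem3 hnmin3
    rw [this] at hsc
    exact hsc
  -- the four links
  have hP1 : P x₁ = (P ^ 1) x₁ := by rw [pow_one]
  have hP2 : P x₂ = (P ^ (e₂ + 1)) x₁ := by
    rw [hx₂, ← Equiv.Perm.mul_apply, ← pow_succ']
  have hP3 : P x₃ = (P ^ (e₃ + 1)) x₁ := by
    rw [hx₃, ← Equiv.Perm.mul_apply, ← pow_succ']
  have link_a : F''.SameCycle zs x₂ := by
    have l := hit 1 e₂ Nat.one_pos h2 (Or.inl rfl)
      (fun _ => le_refl e₂) (fun _ => le_of_lt h23) (le_of_lt (lt_trans h23 h3ℓ))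
    have : F''.SameCycle zs ((P ^ 1) x₁) := ⟨1, by simpa using evz.trans hP1⟩
    exact this.trans l
  have link_b : F''.SameCycle x₁ x₃ := by
    have l := hit (e₂ + 1) e₃ (Nat.succ_pos e₂) h23 (Or.inr (Or.inl rfl))
      (fun h => absurd h (by omega)) (fun _ => le_refl e₃) (le_of_lt h3ℓ)
    have : F''.SameCycle x₁ ((P ^ (e₂ + 1)) x₁) := ⟨1, by simpa using ev1.trans hP2⟩
    exact this.trans l
  have link_c : F''.SameCycle x₂ x₁ := by
    have l := hit (e₃ + 1) ℓ (Nat.succ_pos e₃) h3ℓ (Or.inr (Or.inr rfl))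
      (fun h => absurd h (by omega)) (fun h => absurd h (by omega)) (le_refl ℓ)
    have l' : F''.SameCycle x₂ ((P ^ (e₃ + 1)) x₁) := ⟨1, by simpa using ev2.trans hP3⟩
    have := l'.trans l
    rwa [hret] at this
  have link_d : F''.SameCycle x₃ zs := by
    have hexz : ∃ n : ℕ, (P ^ n) (P zs) ∈ M4 := by
      have : P.SameCycle (P zs) zs := (Equiv.Perm.sameCycle_apply_left).mpr
        (Equiv.Perm.SameCycle.refl P zs)
      obtain ⟨n, _, hn⟩ := this.exists_pow_eq'
      exact ⟨n, by rw [hn]; left; rfl⟩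
    obtain ⟨n, hnmem, _, hsc⟩ := reach P F'' M4 hag (P zs) hexz
    have horb : P.SameCycle zs ((P ^ n) (P zs)) :=
      ((Equiv.Perm.sameCycle_apply_right).mpr (Equiv.Perm.SameCycle.refl P zs)).trans
        (sameCycle_pow P (P zs) n)
    have hz' : (P ^ n) (P zs) = zs := by
      rcases hnmem with h | h | h | h
      · exact h
      · exact absurd (h ▸ horb : P.SameCycle zs x₁) (fun hh => hzCL (hx₁CL.trans hh.symm))
      · exact absurd (h ▸ horb : P.SameCycle zs x₂) (fun hh => hzCL (hx₂CL.trans hh.symm))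
      · exact absurd (h ▸ horb : P.SameCycle zs x₃) (fun hh => hzCL (hx₃CL.trans hh.symm))
    have l' : F''.SameCycle x₃ (P zs) := ⟨1, by simpa using ev3⟩
    rw [hz'] at hsc
    exact l'.trans hsc
  -- every old class member reaches one of x₁ x₂ x₃
  have hreachcls : ∀ w, P.SameCycle w₀ w → F''.SameCycle w x₁ := by
    intro w hw
    have hwx : P.SameCycle w x₁ := hw.symm.trans hx₁CL
    obtain ⟨n, _, hn⟩ := hwx.exists_pow_eq'
    obtain ⟨n', hmem, _, hsc⟩ := reach P F'' M4 hag w ⟨n, by rw [hn]; right; left; rfl⟩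
    have horb : P.SameCycle w₀ ((P ^ n') w) := hw.trans (sameCycle_pow P w n')
    rcases hmem with h | h | h | h
    · exact absurd (h ▸ horb) hzCL
    · rw [h] at hsc; exact hsc
    · rw [h] at hsc; exact hsc.trans link_c
    · rw [h] at hsc; exact hsc.trans (link_b.symm)
  have hw₀x₁ : F''.SameCycle w₀ x₁ := hreachcls w₀ (Equiv.Perm.SameCycle.refl P w₀)
  have hzsjoin : F''.SameCycle w₀ zs := by
    exact hw₀x₁.trans (link_a.trans link_c).symm
  refine ⟨F'', evz, ev1, ev2, ev3, evoth, ?_, hzsjoin⟩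
  intro w hw
  exact hw₀x₁.trans (hreachcls w hw).symm

end Moves
end S19

namespace S19
section Main

variable {k m : ℕ} (G : (Fin (k+1) × Fin m) → (Fin (k+1) × Fin m) → Prop)
  (V1 V2 : Fin (k+1) → Finset (Fin m)) {W : Type} [Fintype W]
  (e : (Fin (k+1) × Fin m) ↪ W) (F : Equiv.Perm W)

/-- Admissible replacement permutations. -/
def Adm (P : Equiv.Perm W) : Prop :=
  (∀ w : W, (∀ i u, u ∈ V1 i → e (i, u) ≠ w) → P w = F w) ∧
  (∀ i, ∀ u ∈ V1 i, ∃ v ∈ V2 (i+1), P (e (i, u)) = e (i+1, v) ∧ G (i, u) (i+1, v))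

set_option maxHeartbeats 1000000 in
lemma exists_adm
    (hmatch : ∀ i, ∃ M : Fin m → Fin m,
      (∀ u ∈ V1 i, M u ∈ V2 (i+1) ∧ G (i, u) (i+1, M u)) ∧
      Set.InjOn M (V1 i) ∧ (V1 i).image M = V2 (i+1))
    (hF2 : ∀ i, ∀ v ∈ V2 (i+1), ∃ u ∈ V1 i, F (e (i, u)) = e (i+1, v)) :
    ∃ P, Adm G V1 V2 e F P := by
  classical
  choose M hMmem hMinj hMsurj using hmatch
  set pred : W → Prop := fun w => ∃ p : Fin (k+1) × Fin m, p.2 ∈ V1 p.1 ∧ e p = w with hpred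
  set φ : W → W := fun w =>
    if h : pred w then
      e ((Classical.choose h).1 + 1, M (Classical.choose h).1 (Classical.choose h).2)
    else F w with hφ
  have evA : ∀ (p : Fin (k+1) × Fin m), p.2 ∈ V1 p.1 →
      φ (e p) = e (p.1 + 1, M p.1 p.2) := by
    intro p hp
    have h : pred (e p) := ⟨p, hp, rfl⟩
    have hch : Classical.choose h = p := e.injective (Classical.choose_spec h).2
    simp only [hφ, dif_pos h, hch]
  have evB : ∀ w, ¬ pred w → φ w = F w := by
    intro w hw
    simp only [hφ, dif_neg hw]
  have hnotpred : ∀ (p : Fin (k+1) × Fin m), p.2 ∈ V1 p.1 → ∀ w, ¬ pred w →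
      e (p.1 + 1, M p.1 p.2) ≠ F w := by
    intro p hp w hw heq
    obtain ⟨u'', hu''V, hu''F⟩ := hF2 p.1 (M p.1 p.2) (hMmem p.1 p.2 hp).1
    rw [heq] at hu''F
    have : w = e (p.1, u'') := F.injective (by rw [hu''F])
    exact hw ⟨(p.1, u''), hu''V, this.symm⟩
  have hinj : Function.Injective φ := by
    intro a b hab
    by_cases ha : pred a <;> by_cases hb : pred b
    · obtain ⟨p, hp1, hp2⟩ := ha
      obtain ⟨q, hq1, hq2⟩ := hb
      subst hp2; subst hq2
      rw [evA p hp1, evA q hq1] at hab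
      have hpq := e.injective hab
      rw [Prod.mk.injEq] at hpq
      have h1 : p.1 = q.1 := by
        have := hpq.1
        exact add_left_injective 1 this
      have h2 : p.2 = q.2 := by
        apply hMinj p.1 hp1 (h1 ▸ hq1)
        rw [hpq.2, h1]
      rw [show p = q from Prod.ext h1 h2]
    · obtain ⟨p, hp1, hp2⟩ := ha
      subst hp2
      rw [evA p hp1, evB b hb] at hab
      exact absurd hab (hnotpred p hp1 b hb)
    · obtain ⟨q, hq1, hq2⟩ := hb
      subst hq2
      rw [evA q hq1, evB a ha] at hab
      exact absurd hab.symm (hnotpred q hq1 a ha)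
    · rw [evB a ha, evB b hb] at hab
      exact F.injective hab
  set P : Equiv.Perm W := Equiv.ofBijective φ ((Finite.injective_iff_bijective).mp hinj)
    with hP
  have hPapp : ∀ w, P w = φ w := fun w => rfl
  refine ⟨P, ?_, ?_⟩
  · intro w hw
    rw [hPapp, evB]
    intro ⟨p, hp1, hp2⟩
    exact hw p.1 p.2 hp1 hp2
  · intro i u hu
    refine ⟨M i u, (hMmem i u hu).1, ?_, (hMmem i u hu).2⟩
    rw [hPapp, evA (i, u) hu]

set_option maxHeartbeats 1000000 in
/-- Finishing a 2/3-rotation move: given a suitable vertex `ux` in the class of `w₀`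
and large sets `A'`, `B'` outside the class, produce a better admissible permutation. -/
lemma finish3 {ε d : ℝ} (hm : 0 < m) (hε : 0 < ε) (hd2 : 2 * ε < d)
    (P : Equiv.Perm W) (hadm : Adm G V1 V2 e F P)
    (i : Fin (k+1))
    (hreg : EpsRegularPair (fun u v : Fin m => G (i, u) (i+1, v)) ε)
    (hdeg : ∀ a : Fin m,
      (d - ε) * m ≤ ((Finset.univ.filter (fun b => G (i, a) (i+1, b))).card : ℝ))
    (vt : Fin (k+1) → Fin m → Fin m)
    (hvt1 : ∀ j u, u ∈ V1 j → vt j u ∈ V2 (j+1))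
    (hvt2 : ∀ j u, u ∈ V1 j → P (e (j, u)) = e (j+1, vt j u))
    (hvtinj : Set.InjOn (vt i) (V1 i))
    (w₀ : W) (ux : Fin m) (hux : ux ∈ V1 i) (huxCL : P.SameCycle w₀ (e (i, ux)))
    (A' B' : Finset (Fin m)) (hA'sub : A' ⊆ V1 i) (hB'sub : B' ⊆ V1 i)
    (hA'NC : ∀ u ∈ A', ¬ P.SameCycle w₀ (e (i, u)))
    (hB'NC : ∀ u ∈ B', ¬ P.SameCycle w₀ (e (i, u)))
    (hA'edge : ∀ u ∈ A', G (i, ux) (i+1, vt i u))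
    (hB'edge : ∀ u ∈ B', G (i, u) (i+1, vt i ux))
    (hA'card : ε * m ≤ (A'.card : ℝ)) (hB'card : ε * m ≤ (B'.card : ℝ)) :
    ∃ P', Adm G V1 V2 e F P' ∧
      (∀ w, P.SameCycle w₀ w → P'.SameCycle w₀ w) ∧
      ∃ j, ∃ u ∈ V1 j, ¬ P.SameCycle w₀ (e (j, u)) ∧ P'.SameCycle w₀ (e (j, u)) := by
  classical
  -- find the middle edge
  have hYcard : ((B'.image (vt i)).card : ℝ) = (B'.card : ℝ) := by
    rw [Finset.card_image_of_injOn (hvtinj.mono (by exact_mod_cast hB'sub))]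
  obtain ⟨u₁, hu₁A, vy, hvyY, hedge⟩ :=
    exists_edge hm hε hd2 hreg hdeg (X := A') (Y := B'.image (vt i))
      hA'card (by rw [hYcard]; exact hB'card)
  obtain ⟨u₂, hu₂B, rfl⟩ := Finset.mem_image.mp hvyY
  have hu₁V : u₁ ∈ V1 i := hA'sub hu₁A
  have hu₂V : u₂ ∈ V1 i := hB'sub hu₂B
  set x : W := e (i, ux) with hx
  set x₁ : W := e (i, u₁) with hx₁
  set x₂ : W := e (i, u₂) with hx₂
  obtain ⟨F'', evx, evx1a, evx1b, evx2, evoth, hmono, hgain⟩ :=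
    mod3 P w₀ x x₁ x₂ huxCL (hA'NC u₁ hu₁A) (hB'NC u₂ hu₂B)
  have hxne : ux ≠ u₁ := fun h => (hA'NC u₁ hu₁A) (h ▸ huxCL)
  have hxne2 : ux ≠ u₂ := fun h => (hB'NC u₂ hu₂B) (h ▸ huxCL)
  refine ⟨F'', ⟨?_, ?_⟩, hmono, i, u₂, hu₂V, hB'NC u₂ hu₂B, hgain⟩
  · -- agrees with F off the matched set
    intro w hw
    have h1 : w ≠ x := fun h => hw i ux hux (h ▸ rfl)
    have h2 : w ≠ x₁ := fun h => hw i u₁ hu₁V (h ▸ rfl)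
    have h3 : w ≠ x₂ := fun h => hw i u₂ hu₂V (h ▸ rfl)
    rw [evoth w h1 h2 h3]
    exact hadm.1 w hw
  · -- matching conditions
    intro jj uu huu
    by_cases hq1 : (jj, uu) = (i, ux)
    · rw [Prod.mk.injEq] at hq1
      have hjq : i = jj := hq1.1.symm
      have huq : ux = uu := hq1.2.symm
      subst hjq; subst huq
      rw [← hx, evx, hx₁, hvt2 i u₁ hu₁V]
      exact ⟨vt i u₁, hvt1 i u₁ hu₁V, rfl, hA'edge u₁ hu₁A⟩
    by_cases hq2 : (jj, uu) = (i, u₁)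
    · rw [Prod.mk.injEq] at hq2
      have hjq : i = jj := hq2.1.symm
      have huq : u₁ = uu := hq2.2.symm
      subst hjq; subst huq
      by_cases h12 : u₁ = u₂
      · rw [← hx₁, evx1b (by rw [hx₁, hx₂, h12]), hx, hvt2 i ux hux]
        exact ⟨vt i ux, hvt1 i ux hux, rfl, h12 ▸ hB'edge u₂ hu₂B⟩
      · rw [← hx₁, evx1a (fun hh => h12 (by
          have h' := e.injective (hx₁ ▸ hx₂ ▸ hh)
          rw [Prod.mk.injEq] at h'
          exact h'.2)), hx₂, hvt2 i u₂ hu₂V]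
        exact ⟨vt i u₂, hvt1 i u₂ hu₂V, rfl, hedge⟩
    by_cases hq3 : (jj, uu) = (i, u₂)
    · rw [Prod.mk.injEq] at hq3
      have hjq : i = jj := hq3.1.symm
      have huq : u₂ = uu := hq3.2.symm
      subst hjq; subst huq
      rw [← hx₂, evx2, hx, hvt2 i ux hux]
      exact ⟨vt i ux, hvt1 i ux hux, rfl, hB'edge u₂ hu₂B⟩
    · have hne1 : e (jj, uu) ≠ x := fun h => hq1 (e.injective h)
      have hne2 : e (jj, uu) ≠ x₁ := fun h => hq2 (e.injective h)
      have hne3 : e (jj, uu) ≠ x₂ := fun h => hq3 (e.injective h)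
      rw [evoth _ hne1 hne2 hne3]
      exact hadm.2 jj uu huu

set_option maxHeartbeats 1600000 in
/-- Finishing a 4-rotation absorbing move. -/
lemma finish4 {ε d : ℝ} (hm : 0 < m) (hε : 0 < ε) (hd2 : 2 * ε < d) (hεm : 10 ≤ ε * m)
    (P : Equiv.Perm W) (hadm : Adm G V1 V2 e F P)
    (i : Fin (k+1))
    (hreg : EpsRegularPair (fun u v : Fin m => G (i, u) (i+1, v)) ε)
    (hdeg : ∀ a : Fin m,
      (d - ε) * m ≤ ((Finset.univ.filter (fun b => G (i, a) (i+1, b))).card : ℝ))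
    (vt : Fin (k+1) → Fin m → Fin m)
    (hvt1 : ∀ j u, u ∈ V1 j → vt j u ∈ V2 (j+1))
    (hvt2 : ∀ j u, u ∈ V1 j → P (e (j, u)) = e (j+1, vt j u))
    (hvtinj : Set.InjOn (vt i) (V1 i))
    (w₀ : W) (uz : Fin m) (huzV : uz ∈ V1 i) (huzNC : ¬ P.SameCycle w₀ (e (i, uz)))
    (u₁ : Fin m) (hu₁V : u₁ ∈ V1 i) (hu₁CL : P.SameCycle w₀ (e (i, u₁)))
    (hu₁edge : G (i, uz) (i+1, vt i u₁))
    (Ppool : Finset (Fin m)) (hPsub : Ppool ⊆ V1 i)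
    (hPCL : ∀ b ∈ Ppool, P.SameCycle w₀ (e (i, b)))
    (hPedge : ∀ b ∈ Ppool, G (i, b) (i+1, vt i uz))
    (hPnotu₁ : u₁ ∉ Ppool)
    (hu₁deg : 2 * (ε * m) + 2 ≤
      ((Ppool.filter (fun u₂ => G (i, u₁) (i+1, vt i u₂))).card : ℝ)) :
    ∃ P', Adm G V1 V2 e F P' ∧
      (∀ w, P.SameCycle w₀ w → P'.SameCycle w₀ w) ∧
      ∃ j, ∃ u ∈ V1 j, ¬ P.SameCycle w₀ (e (j, u)) ∧ P'.SameCycle w₀ (e (j, u)) := by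
  classical
  set x₁ : W := e (i, u₁) with hx₁
  set zs : W := e (i, uz) with hzs
  -- cycle length at x₁
  have hretex : ∃ n, 0 < n ∧ (P ^ n) x₁ = x₁ := by
    refine ⟨orderOf P, ?_, by rw [pow_orderOf_eq_one]; rfl⟩
    exact orderOf_pos P
  set ℓ : ℕ := Nat.find hretex with hℓ
  obtain ⟨hℓpos, hret⟩ := Nat.find_spec hretex
  have hmin : ∀ j, 0 < j → j < ℓ → (P ^ j) x₁ ≠ x₁ := by
    intro j hj0 hjℓ hj
    exact Nat.find_min hretex hjℓ ⟨hj0, hj⟩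
  -- position function
  have hpex : ∀ b ∈ Ppool, ∃ n, 0 < n ∧ (P ^ n) x₁ = e (i, b) := by
    intro b hb
    have hsc : P.SameCycle x₁ (e (i, b)) := hu₁CL.symm.trans (hPCL b hb)
    obtain ⟨n, _, hn⟩ := hsc.exists_pow_eq'
    rcases Nat.eq_zero_or_pos n with rfl | hnpos
    · exfalso
      apply hPnotu₁
      simp only [pow_zero, Equiv.Perm.one_apply] at hn
      have := e.injective (hx₁ ▸ hn)
      rw [Prod.mk.injEq] at this
      rwa [← this.2] at hb
    · exact ⟨n, hnpos, hn⟩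
  set pfun : Fin m → ℕ := fun b =>
    if h : ∃ n, 0 < n ∧ (P ^ n) x₁ = e (i, b) then Nat.find h else 0 with hpfun
  have hpspec : ∀ b ∈ Ppool, 0 < pfun b ∧ (P ^ pfun b) x₁ = e (i, b) := by
    intro b hb
    simp only [hpfun, dif_pos (hpex b hb)]
    exact Nat.find_spec (hpex b hb)
  have hplt : ∀ b ∈ Ppool, pfun b < ℓ := by
    intro b hb
    obtain ⟨hp0, hpeq⟩ := hpspec b hb
    have hq : (P ^ (pfun b % ℓ)) x₁ = e (i, b) := by
      rw [pow_mod_fix P x₁ ℓ hret]; exact hpeq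
    have hq0 : 0 < pfun b % ℓ := by
      rcases Nat.eq_zero_or_pos (pfun b % ℓ) with h0 | h
      · exfalso
        rw [h0] at hq
        simp only [pow_zero, Equiv.Perm.one_apply] at hq
        apply hPnotu₁
        have := e.injective (hx₁ ▸ hq)
        rw [Prod.mk.injEq] at this
        rwa [← this.2] at hb
      · exact h
    have hle : pfun b ≤ pfun b % ℓ := by
      have heq : pfun b = Nat.find (hpex b hb) := by
        simp only [hpfun, dif_pos (hpex b hb)]
      calc pfun b = Nat.find (hpex b hb) := heq
        _ ≤ pfun b % ℓ := Nat.find_min' (hpex b hb) ⟨hq0, hq⟩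
    calc pfun b ≤ pfun b % ℓ := hle
      _ < ℓ := Nat.mod_lt _ hℓpos
  have hpinj : Set.InjOn pfun Ppool := by
    intro a ha b hb hab
    have h1 := (hpspec a ha).2
    have h2 := (hpspec b hb).2
    rw [hab, h2] at h1
    have := e.injective h1
    rw [Prod.mk.injEq] at this
    exact this.2.symm
  -- top slice
  set L : ℕ := Nat.ceil (ε * m) with hLdef
  have hL1 : ε * m ≤ (L : ℝ) := Nat.le_ceil _
  have hL2 : (L : ℝ) ≤ ε * m + 1 := le_of_lt (Nat.ceil_lt_add_one (by positivity))
  have hfilsub : Ppool.filter (fun u₂ => G (i, u₁) (i+1, vt i u₂)) ⊆ Ppool :=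
    Finset.filter_subset _ _
  have hPcard : 2 * (ε * m) + 2 ≤ (Ppool.card : ℝ) :=
    le_trans hu₁deg (by exact_mod_cast Nat.cast_le.mpr (Finset.card_le_card hfilsub))
  have hLP : L ≤ Ppool.card := by
    have : (L : ℝ) ≤ (Ppool.card : ℝ) := by linarith
    exact_mod_cast this
  obtain ⟨Q, hQsub, hQcard, hQtop⟩ := exists_top pfun L Ppool hpinj hLP
  -- middle pool
  set Mfil := Ppool.filter (fun u₂ => G (i, u₁) (i+1, vt i u₂)) with hMfil
  set M₂ := Mfil \ Q with hM₂
  have hM₂card : ε * m ≤ (M₂.card : ℝ) := by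
    have h1 : Mfil.card ≤ M₂.card + Q.card := Finset.card_le_card_sdiff_add_card
    have h1' : (Mfil.card : ℝ) ≤ (M₂.card : ℝ) + (Q.card : ℝ) := by exact_mod_cast h1
    rw [hQcard] at h1'
    linarith
  have hQimcard : ((Q.image (vt i)).card : ℝ) = (L : ℝ) := by
    rw [Finset.card_image_of_injOn
      (hvtinj.mono (fun x hx => by exact hPsub (hQsub hx))), hQcard]
  obtain ⟨u₂, hu₂M, vy, hvyY, hedge2⟩ :=
    exists_edge hm hε hd2 hreg hdeg (X := M₂) (Y := Q.image (vt i))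
      hM₂card (by rw [hQimcard]; exact hL1)
  obtain ⟨b, hbQ, rfl⟩ := Finset.mem_image.mp hvyY
  have hu₂P : u₂ ∈ Ppool := hfilsub ((Finset.mem_sdiff.mp hu₂M).1)
  have hu₂Q : u₂ ∉ Q := (Finset.mem_sdiff.mp hu₂M).2
  have hu₂edge : G (i, u₁) (i+1, vt i u₂) :=
    (Finset.mem_filter.mp ((Finset.mem_sdiff.mp hu₂M).1)).2
  have hbP : b ∈ Ppool := hQsub hbQ
  -- exponents
  set e₂ := pfun u₂ with he₂
  set e₃ := pfun b with he₃
  have h2 : 0 < e₂ := (hpspec u₂ hu₂P).1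
  have h23 : e₂ < e₃ := hQtop u₂ hu₂P hu₂Q b hbQ
  have h3ℓ : e₃ < ℓ := hplt b hbP
  have hx₂eq : (P ^ e₂) x₁ = e (i, u₂) := (hpspec u₂ hu₂P).2
  have hx₃eq : (P ^ e₃) x₁ = e (i, b) := (hpspec b hbP).2
  obtain ⟨F'', evz, ev1, ev2, ev3, evoth, hmono, hgain⟩ :=
    mod4 P w₀ zs x₁ ℓ e₂ e₃ hret hmin h2 h23 h3ℓ hu₁CL huzNC
  rw [hx₂eq] at ev1 ev2 evoth
  rw [hx₃eq] at ev2 ev3 evoth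
  -- e-point versions of the evaluations
  have evz' : F'' (e (i, uz)) = e (i+1, vt i u₁) := by
    rw [← hzs, evz, hx₁, hvt2 i u₁ hu₁V]
  have ev1' : F'' (e (i, u₁)) = e (i+1, vt i u₂) := by
    rw [← hx₁, ev1, hvt2 i u₂ (hPsub hu₂P)]
  have ev2' : F'' (e (i, u₂)) = e (i+1, vt i b) := by
    rw [ev2, hvt2 i b (hPsub hbP)]
  have ev3' : F'' (e (i, b)) = e (i+1, vt i uz) := by
    rw [ev3, hzs, hvt2 i uz huzV]
  refine ⟨F'', ⟨?_, ?_⟩, hmono, i, uz, huzV, huzNC, hgain⟩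
  · intro w hw
    have h1 : w ≠ zs := fun h => hw i uz huzV (h ▸ rfl)
    have h2' : w ≠ x₁ := fun h => hw i u₁ hu₁V (h ▸ rfl)
    have h3' : w ≠ e (i, u₂) := fun h => hw i u₂ (hPsub hu₂P) (h ▸ rfl)
    have h4' : w ≠ e (i, b) := fun h => hw i b (hPsub hbP) (h ▸ rfl)
    rw [evoth w h1 h2' h3' h4']
    exact hadm.1 w hw
  · intro jj uu huu
    by_cases hq1 : (jj, uu) = (i, uz)
    · rw [Prod.mk.injEq] at hq1
      have hjq : i = jj := hq1.1.symm
      have huq : uz = uu := hq1.2.symm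
      subst hjq; subst huq
      rw [evz']
      exact ⟨vt i u₁, hvt1 i u₁ hu₁V, rfl, hu₁edge⟩
    by_cases hq2 : (jj, uu) = (i, u₁)
    · rw [Prod.mk.injEq] at hq2
      have hjq : i = jj := hq2.1.symm
      have huq : u₁ = uu := hq2.2.symm
      subst hjq; subst huq
      rw [ev1']
      exact ⟨vt i u₂, hvt1 i u₂ (hPsub hu₂P), rfl, hu₂edge⟩
    by_cases hq3 : (jj, uu) = (i, u₂)
    · rw [Prod.mk.injEq] at hq3
      have hjq : i = jj := hq3.1.symm
      have huq : u₂ = uu := hq3.2.symm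
      subst hjq; subst huq
      rw [ev2']
      exact ⟨vt i b, hvt1 i b (hPsub hbP), rfl, hedge2⟩
    by_cases hq4 : (jj, uu) = (i, b)
    · rw [Prod.mk.injEq] at hq4
      have hjq : i = jj := hq4.1.symm
      have huq : b = uu := hq4.2.symm
      subst hjq; subst huq
      rw [ev3']
      exact ⟨vt i uz, hvt1 i uz huzV, rfl, hPedge b hbP⟩
    · have hne1 : e (jj, uu) ≠ zs := fun h => hq1 (e.injective (hzs ▸ h))
      have hne2 : e (jj, uu) ≠ x₁ := fun h => hq2 (e.injective (hx₁ ▸ h))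
      have hne3 : e (jj, uu) ≠ e (i, u₂) := fun h => hq3 (e.injective h)
      have hne4 : e (jj, uu) ≠ e (i, b) := fun h => hq4 (e.injective h)
      rw [evoth _ hne1 hne2 hne3 hne4]
      exact hadm.2 jj uu huu

open Fin.NatCast in
set_option maxHeartbeats 4000000 in
/-- The merging step: while some matched vertex is missing from the cycle of `w₀`,
we can grow that cycle, preserving admissibility. -/
lemma grow {ε d : ℝ} (hm : 0 < m) (hε : 0 < ε) (hd : 0 < d) (hd1 : d < 1)
    (hεd : 100 * ε ≤ d * d * (1 - d)) (hεm : 10 ≤ ε * m)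
    (hreg : ∀ i, EpsRegularPair (fun u v : Fin m => G (i, u) (i+1, v)) ε)
    (hdeg : ∀ (i : Fin (k+1)) (a : Fin m),
      (d - ε) * m ≤ ((Finset.univ.filter (fun b => G (i, a) (i+1, b))).card : ℝ))
    (hdegin : ∀ (i : Fin (k+1)) (b : Fin m),
      (d - ε) * m ≤ ((Finset.univ.filter (fun a => G (i, a) (i+1, b))).card : ℝ))
    (hV : ∀ i, (1 - d/2) * m ≤ ((V1 i).card : ℝ) ∧ (1 - d/2) * m ≤ ((V2 i).card : ℝ))
    (hcard : ∀ i, (V1 i).card = (V2 (i+1)).card)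
    (i₀ : Fin (k+1)) (u₀ : Fin m) (hu₀ : u₀ ∈ V1 i₀)
    (P : Equiv.Perm W) (hadm : Adm G V1 V2 e F P)
    (hne : ∃ j, ∃ u ∈ V1 j, ¬ P.SameCycle (e (i₀, u₀)) (e (j, u))) :
    ∃ P', Adm G V1 V2 e F P' ∧
      (∀ w, P.SameCycle (e (i₀, u₀)) w → P'.SameCycle (e (i₀, u₀)) w) ∧
      ∃ j, ∃ u ∈ V1 j, ¬ P.SameCycle (e (i₀, u₀)) (e (j, u)) ∧
        P'.SameCycle (e (i₀, u₀)) (e (j, u)) := by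
  classical
  -- numeric facts
  have hd2 : 2 * ε < d := by nlinarith
  have hεd1 : 100 * ε ≤ d * d := by nlinarith
  have hεd2 : 100 * ε ≤ d := by nlinarith
  have hεd3 : 100 * ε ≤ d * (1 - d) := by nlinarith
  have hm' : (0:ℝ) < m := Nat.cast_pos.mpr hm
  -- the v-map
  choose vfun hv1 hv2 hv3 using hadm.2
  set vt : Fin (k+1) → Fin m → Fin m := fun i u =>
    if h : u ∈ V1 i then vfun i u h else u with hvtdef
  have hvt1 : ∀ j u, u ∈ V1 j → vt j u ∈ V2 (j+1) := by
    intro j u hu; simp only [hvtdef, dif_pos hu]; exact hv1 j u hu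
  have hvt2 : ∀ j u, u ∈ V1 j → P (e (j, u)) = e (j+1, vt j u) := by
    intro j u hu; simp only [hvtdef, dif_pos hu]; exact hv2 j u hu
  have hvt3 : ∀ j u, u ∈ V1 j → G (j, u) (j+1, vt j u) := by
    intro j u hu; simp only [hvtdef, dif_pos hu]; exact hv3 j u hu
  have hvtinj : ∀ j, Set.InjOn (vt j) (V1 j) := by
    intro j a ha b hb hab
    have h1 : P (e (j, a)) = P (e (j, b)) := by
      rw [hvt2 j a ha, hvt2 j b hb, hab]
    have := e.injective (P.injective h1)
    rw [Prod.mk.injEq] at this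
    exact this.2
  have hvtsurj : ∀ j, (V1 j).image (vt j) = V2 (j+1) := by
    intro j
    apply Finset.eq_of_subset_of_card_le
    · intro v hv
      obtain ⟨u, hu, rfl⟩ := Finset.mem_image.mp hv
      exact hvt1 j u hu
    · rw [Finset.card_image_of_injOn (hvtinj j), hcard j]
  -- filter transfer
  have cardfil : ∀ (j : Fin (k+1)) (S : Finset (Fin m)), S ⊆ V1 j →
      ∀ q : Fin m → Prop,
      ((S.image (vt j)).filter q).card = (S.filter (fun u => q (vt j u))).card := by
    intro j S hS q
    rw [Finset.filter_image]
    rw [Finset.card_image_of_injOn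
      ((hvtinj j).mono (fun x hx => hS (Finset.mem_filter.mp hx).1))]
  set w₀ : W := e (i₀, u₀) with hw₀
  set CS : Fin (k+1) → Finset (Fin m) := fun j =>
    (V1 j).filter (fun u => P.SameCycle w₀ (e (j, u))) with hCS
  have hCSsub : ∀ j, CS j ⊆ V1 j := fun j => Finset.filter_subset _ _
  have hNC : ∀ j u, u ∈ V1 j → u ∉ CS j → ¬ P.SameCycle w₀ (e (j, u)) := by
    intro j u hu hucs hsc
    exact hucs (Finset.mem_filter.mpr ⟨hu, hsc⟩)
  -- degree bounds into V2 resp from V1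
  have hVdeg : ∀ (j : Fin (k+1)) (a : Fin m),
      (d/2 - ε) * m ≤ (((V2 (j+1)).filter (fun v => G (j, a) (j+1, v))).card : ℝ) := by
    intro j a
    have h1 := deg_into (g := fun u v => G (j, u) (j+1, v)) (d := d) (ε := ε) a
      (hdeg j) (V2 (j+1))
    have h2 := (hV (j+1)).2
    nlinarith
  have hVdegin : ∀ (j : Fin (k+1)) (b : Fin m),
      (d/2 - ε) * m ≤ (((V1 j).filter (fun a => G (j, a) (j+1, b))).card : ℝ) := by
    intro j b
    have h1 := deg_into_in (g := fun u v => G (j, u) (j+1, v)) (d := d) (ε := ε) b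
      (hdegin j) (V1 j)
    have h2 := (hV j).1
    nlinarith
  -- counting: full neighbourhoods inside V1 j via vt
  have hS0 : ∀ (j : Fin (k+1)) (a : Fin m),
      (d/2 - ε) * m ≤ (((V1 j).filter (fun u => G (j, a) (j+1, vt j u))).card : ℝ) := by
    intro j a
    have := cardfil j (V1 j) (Finset.Subset.refl _) (fun v => G (j, a) (j+1, v))
    rw [hvtsurj j] at this
    rw [← this]
    exact hVdeg j a
  -- subset split bound
  have hsplit : ∀ (j : Fin (k+1)) (S T R : Finset (Fin m)), S ⊆ T ∪ R →
      (S.card : ℝ) ≤ (T.card : ℝ) + (R.card : ℝ) := by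
    intro j S T R hsub
    calc (S.card : ℝ) ≤ ((T ∪ R).card : ℝ) := by exact_mod_cast Finset.card_le_card hsub
      _ ≤ _ := by exact_mod_cast Finset.card_union_le _ _
  by_cases hcaseA : ∃ j, (CS j).Nonempty ∧ ((CS j).card : ℝ) ≤ (d/2 - ε) * m - ε * m
  · -- Case A : small 3-rotation via minimum degree
    obtain ⟨i, ⟨ux, huxCS⟩, hsize⟩ := hcaseA
    have hux : ux ∈ V1 i := hCSsub i huxCS
    have huxCL : P.SameCycle w₀ (e (i, ux)) := (Finset.mem_filter.mp huxCS).2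
    set A' := ((V1 i) \ CS i).filter (fun u => G (i, ux) (i+1, vt i u)) with hA'
    set B' := ((V1 i) \ CS i).filter (fun u => G (i, u) (i+1, vt i ux)) with hB'
    have hA'card : ε * m ≤ (A'.card : ℝ) := by
      have hsub : (V1 i).filter (fun u => G (i, ux) (i+1, vt i u)) ⊆ A' ∪ CS i := by
        intro u hu
        obtain ⟨huV, hedge⟩ := Finset.mem_filter.mp hu
        by_cases hcs : u ∈ CS i
        · exact Finset.mem_union_right _ hcs
        · exact Finset.mem_union_left _ (Finset.mem_filter.mpr
            ⟨Finset.mem_sdiff.mpr ⟨huV, hcs⟩, hedge⟩)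
      have := hsplit i _ _ _ hsub
      have h0 := hS0 i ux
      linarith
    have hB'card : ε * m ≤ (B'.card : ℝ) := by
      have hsub : (V1 i).filter (fun u => G (i, u) (i+1, vt i ux)) ⊆ B' ∪ CS i := by
        intro u hu
        obtain ⟨huV, hedge⟩ := Finset.mem_filter.mp hu
        by_cases hcs : u ∈ CS i
        · exact Finset.mem_union_right _ hcs
        · exact Finset.mem_union_left _ (Finset.mem_filter.mpr
            ⟨Finset.mem_sdiff.mpr ⟨huV, hcs⟩, hedge⟩)
      have := hsplit i _ _ _ hsub
      have h0 := hVdegin i (vt i ux)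
      linarith
    refine finish3 G V1 V2 e F hm hε hd2 P hadm i (hreg i) (hdeg i) vt hvt1 hvt2
      (hvtinj i) w₀ ux hux huxCL A' B' ?_ ?_ ?_ ?_ ?_ ?_ hA'card hB'card
    · intro u hu
      exact (Finset.mem_sdiff.mp (Finset.mem_filter.mp hu).1).1
    · intro u hu
      exact (Finset.mem_sdiff.mp (Finset.mem_filter.mp hu).1).1
    · intro u hu
      obtain ⟨hsd, _⟩ := Finset.mem_filter.mp hu
      obtain ⟨huV, hcs⟩ := Finset.mem_sdiff.mp hsd
      exact hNC i u huV hcs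
    · intro u hu
      obtain ⟨hsd, _⟩ := Finset.mem_filter.mp hu
      obtain ⟨huV, hcs⟩ := Finset.mem_sdiff.mp hsd
      exact hNC i u huV hcs
    · intro u hu
      exact (Finset.mem_filter.mp hu).2
    · intro u hu
      exact (Finset.mem_filter.mp hu).2
  by_cases hcaseB : ∃ j, (CS j).Nonempty ∧
      (d * (1 - d) / 4) * m ≤ (((V1 j) \ CS j).card : ℝ)
  · -- Case B : 3-rotation via regularity bad sets
    obtain ⟨i, hCSne, hbigout⟩ := hcaseB
    push_neg at hcaseA
    have hCSbig : (d/2 - ε) * m - ε * m < ((CS i).card : ℝ) := hcaseA i hCSne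
    set X := (V1 i) \ CS i with hX
    set Y := X.image (vt i) with hY
    have hXsub : X ⊆ V1 i := Finset.sdiff_subset
    have hYcard : (Y.card : ℝ) = (X.card : ℝ) := by
      rw [hY, Finset.card_image_of_injOn ((hvtinj i).mono (fun x hx => hXsub hx))]
    have hYbig : ε * m ≤ (Y.card : ℝ) := by
      rw [hYcard]
      nlinarith
    have hXbig : ε * m ≤ (X.card : ℝ) := by nlinarith
    -- bad sets
    have hbad1 := badset_out (g := fun u v => G (i, u) (i+1, v)) (d := d)
      hm hε (hreg i) (hdeg i) hYbig
    have hbad2 := badset_in (g := fun u v => G (i, u) (i+1, v)) (d := d)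
      hm hε (hreg i) (hdeg i) hXbig
    set Bad1 := Finset.univ.filter (fun a : Fin m =>
      ((Y.filter (fun v => G (i, a) (i+1, v))).card : ℝ) < (d - 2*ε) * (Y.card : ℝ)) with hBad1
    set Bad2 := Finset.univ.filter (fun vb : Fin m =>
      ((X.filter (fun a => G (i, a) (i+1, vb))).card : ℝ) < (d - 2*ε) * (X.card : ℝ)) with hBad2
    set Pull := (CS i).filter (fun u => vt i u ∈ Bad2) with hPull
    have hPullcard : (Pull.card : ℝ) ≤ (Bad2.card : ℝ) := by
      have h := Finset.card_le_card_of_injOn (s := Pull) (t := Bad2) (vt i)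
        (fun u hu => (Finset.mem_filter.mp hu).2)
        ((hvtinj i).mono (fun x hx => hCSsub i (Finset.mem_filter.mp hx).1))
      exact_mod_cast h
    -- choose a good vertex ux
    have hGoodne : (CS i \ (Bad1 ∪ Pull)).Nonempty := by
      rw [← Finset.card_pos]
      have h1 : ((CS i \ (Bad1 ∪ Pull)).card : ℝ)
          ≥ ((CS i).card : ℝ) - ((Bad1 ∪ Pull).card : ℝ) := by
        have := Finset.card_le_card_sdiff_add_card (s := CS i) (t := Bad1 ∪ Pull)
        have h' : ((CS i).card : ℝ) ≤ ((CS i \ (Bad1 ∪ Pull)).card : ℝ)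
            + ((Bad1 ∪ Pull).card : ℝ) := by exact_mod_cast this
        linarith
      have h2 : ((Bad1 ∪ Pull).card : ℝ) ≤ (Bad1.card : ℝ) + (Pull.card : ℝ) := by
        exact_mod_cast Finset.card_union_le _ _
      have h3 : (0:ℝ) < ((CS i \ (Bad1 ∪ Pull)).card : ℝ) := by nlinarith
      exact_mod_cast h3
    obtain ⟨ux, huxGood⟩ := hGoodne
    obtain ⟨huxCS, huxBad⟩ := Finset.mem_sdiff.mp huxGood
    have hux : ux ∈ V1 i := hCSsub i huxCS
    have huxCL : P.SameCycle w₀ (e (i, ux)) := (Finset.mem_filter.mp huxCS).2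
    have huxB1 : ux ∉ Bad1 := fun h => huxBad (Finset.mem_union_left _ h)
    have huxB2 : vt i ux ∉ Bad2 := fun h =>
      huxBad (Finset.mem_union_right _ (Finset.mem_filter.mpr ⟨huxCS, h⟩))
    -- pools
    set A' := X.filter (fun u => G (i, ux) (i+1, vt i u)) with hA'
    set B' := X.filter (fun u => G (i, u) (i+1, vt i ux)) with hB'
    have hA'card : ε * m ≤ (A'.card : ℝ) := by
      have hnb : ¬ (((Y.filter (fun v => G (i, ux) (i+1, v))).card : ℝ)
          < (d - 2*ε) * (Y.card : ℝ)) := by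
        intro h
        exact huxB1 (Finset.mem_filter.mpr ⟨Finset.mem_univ _, h⟩)
      push_neg at hnb
      have htrans : ((Y.filter (fun v => G (i, ux) (i+1, v))).card : ℝ) = (A'.card : ℝ) := by
        rw [hY, hA']
        exact_mod_cast cardfil i X hXsub (fun v => G (i, ux) (i+1, v))
      rw [htrans] at hnb
      rw [hYcard] at hnb
      nlinarith
    have hB'card : ε * m ≤ (B'.card : ℝ) := by
      have hnb : ¬ (((X.filter (fun a => G (i, a) (i+1, vt i ux))).card : ℝ)
          < (d - 2*ε) * (X.card : ℝ)) := by
        intro h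
        exact huxB2 (Finset.mem_filter.mpr ⟨Finset.mem_univ _, h⟩)
      push_neg at hnb
      nlinarith
    refine finish3 G V1 V2 e F hm hε hd2 P hadm i (hreg i) (hdeg i) vt hvt1 hvt2
      (hvtinj i) w₀ ux hux huxCL A' B' ?_ ?_ ?_ ?_ ?_ ?_ hA'card hB'card
    · intro u hu
      exact hXsub (Finset.mem_filter.mp hu).1
    · intro u hu
      exact hXsub (Finset.mem_filter.mp hu).1
    · intro u hu
      obtain ⟨hsd, _⟩ := Finset.mem_filter.mp hu
      obtain ⟨huV, hcs⟩ := Finset.mem_sdiff.mp hsd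
      exact hNC i u huV hcs
    · intro u hu
      obtain ⟨hsd, _⟩ := Finset.mem_filter.mp hu
      obtain ⟨huV, hcs⟩ := Finset.mem_sdiff.mp hsd
      exact hNC i u huV hcs
    · intro u hu
      exact (Finset.mem_filter.mp hu).2
    · intro u hu
      exact (Finset.mem_filter.mp hu).2
  · -- Case C : absorb a vertex outside the cycle via a 4-rotation
    push_neg at hcaseB
    have hstart : (CS i₀).Nonempty :=
      ⟨u₀, Finset.mem_filter.mpr ⟨hu₀, Equiv.Perm.SameCycle.refl P w₀⟩⟩
    have hstep : ∀ j, (CS j).Nonempty → (CS (j+1)).Nonempty := by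
      intro j hj
      have hfj := hcaseB j hj
      set Im := (CS j).image (vt j) with hIm
      have hImcard : (Im.card : ℝ) = ((CS j).card : ℝ) := by
        rw [hIm, Finset.card_image_of_injOn ((hvtinj j).mono (fun x hx => hCSsub j hx))]
      have hImsub : Im ⊆ V2 (j+1) := by
        intro v hv
        obtain ⟨u, hu, rfl⟩ := Finset.mem_image.mp hv
        exact hvt1 j u (hCSsub j hu)
      set Tint := V1 (j+1) ∩ V2 (j+1) with hTint
      have hint : (0:ℝ) < ((Im ∩ Tint).card : ℝ) := by
        have h1 : (Im ∩ Tint).card + (Im ∪ Tint).card = Im.card + Tint.card :=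
          Finset.card_inter_add_card_union Im Tint
        have h1' : ((Im ∩ Tint).card : ℝ) + ((Im ∪ Tint).card : ℝ)
            = (Im.card : ℝ) + (Tint.card : ℝ) := by exact_mod_cast h1
        have h2 : Im ∪ Tint ⊆ V2 (j+1) :=
          Finset.union_subset hImsub Finset.inter_subset_right
        have h2' : ((Im ∪ Tint).card : ℝ) ≤ ((V2 (j+1)).card : ℝ) := by
          exact_mod_cast Finset.card_le_card h2
        have h5 : (V1 (j+1) ∩ V2 (j+1)).card + (V1 (j+1) ∪ V2 (j+1)).card
            = (V1 (j+1)).card + (V2 (j+1)).card := Finset.card_inter_add_card_union _ _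
        have h5' : ((Tint).card : ℝ) + ((V1 (j+1) ∪ V2 (j+1)).card : ℝ)
            = ((V1 (j+1)).card : ℝ) + ((V2 (j+1)).card : ℝ) := by
          rw [hTint]; exact_mod_cast h5
        have h6 : ((V1 (j+1) ∪ V2 (j+1)).card : ℝ) ≤ (m : ℝ) := by
          have h7 : (V1 (j+1) ∪ V2 (j+1)).card ≤ m := by
            simpa using Finset.card_le_univ (V1 (j+1) ∪ V2 (j+1))
          exact_mod_cast h7
        have h8 : ((V1 j).card : ℝ) ≤ (((V1 j) \ CS j).card : ℝ) + ((CS j).card : ℝ) := by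
          exact_mod_cast Finset.card_le_card_sdiff_add_card
        have hV1j := (hV j).1
        have hV1j1 := (hV (j+1)).1
        have hV2j1 := (hV (j+1)).2
        have hcc : ((V1 j).card : ℝ) = ((V2 (j+1)).card : ℝ) := by exact_mod_cast hcard j
        nlinarith
      have hintne : (Im ∩ Tint).Nonempty := by
        rw [← Finset.card_pos]
        exact_mod_cast hint
      obtain ⟨vs, hvs⟩ := hintne
      obtain ⟨hvIm, hvT⟩ := Finset.mem_inter.mp hvs
      obtain ⟨us, huCS, rfl⟩ := Finset.mem_image.mp hvIm
      refine ⟨vt j us, Finset.mem_filter.mpr ⟨(Finset.mem_inter.mp hvT).1, ?_⟩⟩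
      have h9 : P.SameCycle w₀ (P (e (j, us))) :=
        (Equiv.Perm.sameCycle_apply_right).mpr (Finset.mem_filter.mp huCS).2
      rwa [hvt2 j us (hCSsub j huCS)] at h9
    have hallfull : ∀ jj : Fin (k+1), (CS jj).Nonempty := by
      have hnat : ∀ n : ℕ, (CS (i₀ + (n : Fin (k+1)))).Nonempty := by
        intro n
        induction n with
        | zero => simpa using hstart
        | succ n ih =>
          have hcast : ((n+1 : ℕ) : Fin (k+1)) = (n : Fin (k+1)) + 1 := by push_cast; ring
          rw [hcast, ← add_assoc]
          exact hstep _ ih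
      intro jj
      have h10 := hnat (jj - i₀).val
      have h11 : i₀ + ((jj - i₀ : Fin (k+1))) = jj := add_sub_cancel i₀ jj
      rwa [Fin.cast_val_eq_self, h11] at h10
    obtain ⟨j, uz, huzV, huzNC⟩ := hne
    have huzCS : uz ∉ CS j := fun h => huzNC (Finset.mem_filter.mp h).2
    have hfj : (((V1 j) \ CS j).card : ℝ) < (d * (1 - d) / 4) * m :=
      hcaseB j (hallfull j)
    set Apool := (CS j).filter (fun u₁ => G (j, uz) (j+1, vt j u₁)) with hAp
    set Ppool0 := (CS j).filter (fun b => G (j, b) (j+1, vt j uz)) with hPp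
    have hApcard : (d/2 - ε) * m - (d * (1 - d) / 4) * m ≤ (Apool.card : ℝ) := by
      have hsub : (V1 j).filter (fun u => G (j, uz) (j+1, vt j u))
          ⊆ Apool ∪ ((V1 j) \ CS j) := by
        intro u hu
        obtain ⟨huV, hedge⟩ := Finset.mem_filter.mp hu
        by_cases hcs : u ∈ CS j
        · exact Finset.mem_union_left _ (Finset.mem_filter.mpr ⟨hcs, hedge⟩)
        · exact Finset.mem_union_right _ (Finset.mem_sdiff.mpr ⟨huV, hcs⟩)
      have h0 := hS0 j uz
      have h1 := hsplit j _ _ _ hsub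
      linarith
    have hPpcard : (d/2 - ε) * m - (d * (1 - d) / 4) * m ≤ (Ppool0.card : ℝ) := by
      have hsub : (V1 j).filter (fun u => G (j, u) (j+1, vt j uz))
          ⊆ Ppool0 ∪ ((V1 j) \ CS j) := by
        intro u hu
        obtain ⟨huV, hedge⟩ := Finset.mem_filter.mp hu
        by_cases hcs : u ∈ CS j
        · exact Finset.mem_union_left _ (Finset.mem_filter.mpr ⟨hcs, hedge⟩)
        · exact Finset.mem_union_right _ (Finset.mem_sdiff.mpr ⟨huV, hcs⟩)
      have h0 := hVdegin j (vt j uz)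
      have h1 := hsplit j _ _ _ hsub
      linarith
    have hPpsubV : Ppool0 ⊆ V1 j := fun x hx => hCSsub j (Finset.mem_filter.mp hx).1
    set Yp := Ppool0.image (vt j) with hYp
    have hYpcard : (Yp.card : ℝ) = (Ppool0.card : ℝ) := by
      rw [hYp, Finset.card_image_of_injOn ((hvtinj j).mono (fun x hx => hPpsubV hx))]
    have hYpbig : ε * m ≤ (Yp.card : ℝ) := by
      rw [hYpcard]
      nlinarith
    have hbadY := badset_out (g := fun u v => G (j, u) (j+1, v)) (d := d)
      hm hε (hreg j) (hdeg j) hYpbig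
    set Bad := Finset.univ.filter (fun a : Fin m =>
      ((Yp.filter (fun v => G (j, a) (j+1, v))).card : ℝ) < (d - 2*ε) * (Yp.card : ℝ))
      with hBadY
    have hABne : (Apool \ Bad).Nonempty := by
      rw [← Finset.card_pos]
      have h1 : ((Apool).card : ℝ) ≤ ((Apool \ Bad).card : ℝ) + (Bad.card : ℝ) := by
        exact_mod_cast Finset.card_le_card_sdiff_add_card
      have h3 : (0:ℝ) < ((Apool \ Bad).card : ℝ) := by nlinarith
      exact_mod_cast h3
    obtain ⟨u₁, hu₁m⟩ := hABne
    obtain ⟨hu₁Ap, hu₁Bad⟩ := Finset.mem_sdiff.mp hu₁m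
    have hu₁CS : u₁ ∈ CS j := (Finset.mem_filter.mp hu₁Ap).1
    have hu₁V : u₁ ∈ V1 j := hCSsub j hu₁CS
    have hu₁CL : P.SameCycle w₀ (e (j, u₁)) := (Finset.mem_filter.mp hu₁CS).2
    have hu₁edge : G (j, uz) (j+1, vt j u₁) := (Finset.mem_filter.mp hu₁Ap).2
    set Ppool := Ppool0.erase u₁ with hPer
    have hu₁deg : 2 * (ε * m) + 2 ≤
        ((Ppool.filter (fun u₂ => G (j, u₁) (j+1, vt j u₂))).card : ℝ) := by
      have hnb : ¬ (((Yp.filter (fun v => G (j, u₁) (j+1, v))).card : ℝ)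
          < (d - 2*ε) * (Yp.card : ℝ)) := by
        intro h
        exact hu₁Bad (Finset.mem_filter.mpr ⟨Finset.mem_univ _, h⟩)
      push_neg at hnb
      have htrans : ((Yp.filter (fun v => G (j, u₁) (j+1, v))).card : ℝ)
          = ((Ppool0.filter (fun u₂ => G (j, u₁) (j+1, vt j u₂))).card : ℝ) := by
        rw [hYp]
        exact_mod_cast cardfil j Ppool0 hPpsubV (fun v => G (j, u₁) (j+1, v))
      have herase : ((Ppool0.filter (fun u₂ => G (j, u₁) (j+1, vt j u₂))).card : ℝ)
          ≤ ((Ppool.filter (fun u₂ => G (j, u₁) (j+1, vt j u₂))).card : ℝ) + 1 := by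
        have hsub2 : Ppool0.filter (fun u₂ => G (j, u₁) (j+1, vt j u₂))
            ⊆ insert u₁ (Ppool.filter (fun u₂ => G (j, u₁) (j+1, vt j u₂))) := by
          intro u hu
          obtain ⟨huP, hedge⟩ := Finset.mem_filter.mp hu
          by_cases h : u = u₁
          · exact Finset.mem_insert.mpr (Or.inl h)
          · exact Finset.mem_insert.mpr (Or.inr (Finset.mem_filter.mpr
              ⟨Finset.mem_erase.mpr ⟨h, huP⟩, hedge⟩))
        calc ((Ppool0.filter (fun u₂ => G (j, u₁) (j+1, vt j u₂))).card : ℝ)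
            ≤ ((insert u₁ (Ppool.filter (fun u₂ => G (j, u₁) (j+1, vt j u₂)))).card : ℝ) := by
              exact_mod_cast Finset.card_le_card hsub2
          _ ≤ _ := by exact_mod_cast Finset.card_insert_le _ _
      rw [htrans] at hnb
      rw [hYpcard] at hnb
      nlinarith
    refine finish4 G V1 V2 e F hm hε hd2 hεm P hadm j (hreg j) (hdeg j) vt hvt1 hvt2
      (hvtinj j) w₀ uz huzV huzNC u₁ hu₁V hu₁CL hu₁edge Ppool ?_ ?_ ?_ ?_ hu₁deg
    · intro x hx
      exact hPpsubV (Finset.mem_of_mem_erase hx)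
    · intro b hb
      exact (Finset.mem_filter.mp
        ((Finset.mem_filter.mp (Finset.mem_of_mem_erase hb)).1)).2
    · intro b hb
      exact (Finset.mem_filter.mp (Finset.mem_of_mem_erase hb)).2
    · exact Finset.notMem_erase u₁ Ppool0

set_option maxHeartbeats 4000000 in
/-- Iterating the merging step until the cycle of `w₀` swallows every matched vertex. -/
lemma saturate {ε d : ℝ} (hm : 0 < m) (hε : 0 < ε) (hd : 0 < d) (hd1 : d < 1)
    (hεd : 100 * ε ≤ d * d * (1 - d)) (hεm : 10 ≤ ε * m)
    (hreg : ∀ i, EpsRegularPair (fun u v : Fin m => G (i, u) (i+1, v)) ε)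
    (hdeg : ∀ (i : Fin (k+1)) (a : Fin m),
      (d - ε) * m ≤ ((Finset.univ.filter (fun b => G (i, a) (i+1, b))).card : ℝ))
    (hdegin : ∀ (i : Fin (k+1)) (b : Fin m),
      (d - ε) * m ≤ ((Finset.univ.filter (fun a => G (i, a) (i+1, b))).card : ℝ))
    (hV : ∀ i, (1 - d/2) * m ≤ ((V1 i).card : ℝ) ∧ (1 - d/2) * m ≤ ((V2 i).card : ℝ))
    (hcard : ∀ i, (V1 i).card = (V2 (i+1)).card)
    (i₀ : Fin (k+1)) (u₀ : Fin m) (hu₀ : u₀ ∈ V1 i₀) :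
    ∀ (n : ℕ) (P : Equiv.Perm W), Adm G V1 V2 e F P →
    ((Finset.univ.filter (fun p : Fin (k+1) × Fin m =>
      p.2 ∈ V1 p.1 ∧ ¬ P.SameCycle (e (i₀, u₀)) (e p))).card ≤ n) →
    ∃ P', Adm G V1 V2 e F P' ∧
      ∀ j, ∀ u ∈ V1 j, P'.SameCycle (e (i₀, u₀)) (e (j, u)) := by
  intro n
  induction n with
  | zero =>
    intro P hadm hcard0
    refine ⟨P, hadm, ?_⟩
    intro j u hu
    by_contra hns
    have : (j, u) ∈ Finset.univ.filter (fun p : Fin (k+1) × Fin m =>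
        p.2 ∈ V1 p.1 ∧ ¬ P.SameCycle (e (i₀, u₀)) (e p)) :=
      Finset.mem_filter.mpr ⟨Finset.mem_univ _, hu, hns⟩
    have h0 := Finset.card_eq_zero.mp (Nat.le_zero.mp hcard0)
    rw [h0] at this
    exact absurd this (Finset.notMem_empty _)
  | succ n ih =>
    intro P hadm hcardn
    set BadP := Finset.univ.filter (fun p : Fin (k+1) × Fin m =>
      p.2 ∈ V1 p.1 ∧ ¬ P.SameCycle (e (i₀, u₀)) (e p)) with hBadP
    rcases BadP.eq_empty_or_nonempty with hempty | hnonempty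
    · refine ⟨P, hadm, ?_⟩
      intro j u hu
      by_contra hns
      have : (j, u) ∈ BadP := Finset.mem_filter.mpr ⟨Finset.mem_univ _, hu, hns⟩
      rw [hempty] at this
      exact absurd this (Finset.notMem_empty _)
    · obtain ⟨p0, hp0⟩ := hnonempty
      have hp0' := Finset.mem_filter.mp hp0
      have hne : ∃ j, ∃ u ∈ V1 j, ¬ P.SameCycle (e (i₀, u₀)) (e (j, u)) :=
        ⟨p0.1, p0.2, hp0'.2.1, hp0'.2.2⟩
      obtain ⟨P', hadm', hmono, jg, ug, hugV, hugNC, hugSC⟩ :=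
        grow G V1 V2 e F hm hε hd hd1 hεd hεm hreg hdeg hdegin hV hcard i₀ u₀ hu₀
          P hadm hne
      apply ih P' hadm'
      set BadP' := Finset.univ.filter (fun p : Fin (k+1) × Fin m =>
        p.2 ∈ V1 p.1 ∧ ¬ P'.SameCycle (e (i₀, u₀)) (e p)) with hBadP'
      have hsub : BadP' ⊆ BadP := by
        intro p hp
        have hp' := Finset.mem_filter.mp hp
        refine Finset.mem_filter.mpr ⟨Finset.mem_univ _, hp'.2.1, ?_⟩
        intro hsc
        exact hp'.2.2 (hmono _ hsc)
      have hssub : BadP' ⊂ BadP := by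
        refine Finset.ssubset_iff_of_subset hsub |>.mpr ?_
        refine ⟨(jg, ug), Finset.mem_filter.mpr ⟨Finset.mem_univ _, hugV, hugNC⟩, ?_⟩
        intro hmem
        exact (Finset.mem_filter.mp hmem).2.2 hugSC
      have := Finset.card_lt_card hssub
      omega

end Main
end S19

set_option maxHeartbeats 4000000 in
/-- Lemma: merging the cycles of a 1-factor into a Hamilton cycle,
case `J = E(C)`. With the hierarchy `0 < 1/m ≪ ε ≪ d < 1` and `1/m ≪ 1/k`:
the clusters are `V_i = {i} × Fin m` for `i : Fin (k+1)`, arranged in the directed cycle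
`C` given by the cyclic successor `i ↦ i+1`. `G` is a digraph on the union of the
clusters such that each `G[V_i, V_{i+1}]` is `(ε,d)`-superregular. For each `i`,
`V1 i ⊆ V_i` and `V2 i ⊆ V_i` have size at least `(1−d/2)m` with `|V1 i| = |V2 (i+1)|`.
`F` is a 1-regular digraph (a permutation of a possibly larger vertex set `W`, into which
the clusters embed via `e`) such that each `F[V1 i, V2 (i+1)]` is a perfect matching and
every cycle of `F` meets some `V1 i`. Then one can replace each matching
`F[V1 i, V2 (i+1)]` by a perfect matching of `G[V1 i, V2 (i+1)]` (keeping all other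
edges of `F`) so that the resulting 1-regular digraph `F'` is a single cycle on `V(F)`. -/
theorem stmt19 : ∀ d : ℝ, 0 < d → d < 1 →
    ∃ ε₀ : ℝ, 0 < ε₀ ∧ ∀ ε : ℝ, 0 < ε → ε ≤ ε₀ →
    ∀ k : ℕ, ∃ m₀ : ℕ, ∀ m : ℕ, m₀ ≤ m →
    ∀ G : (Fin (k + 1) × Fin m) → (Fin (k + 1) × Fin m) → Prop,
    (∀ i : Fin (k + 1),
      SuperRegularPair (fun u v : Fin m => G (i, u) (i + 1, v)) ε d) →
    ∀ V1 V2 : Fin (k + 1) → Finset (Fin m),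
    (∀ i, (1 - d / 2) * (m : ℝ) ≤ ((V1 i).card : ℝ) ∧
          (1 - d / 2) * (m : ℝ) ≤ ((V2 i).card : ℝ)) →
    (∀ i, (V1 i).card = (V2 (i + 1)).card) →
    ∀ (W : Type) (_ : Fintype W) (e : (Fin (k + 1) × Fin m) ↪ W) (F : Equiv.Perm W),
    (∀ i : Fin (k + 1),
      (∀ u ∈ V1 i, ∃ v ∈ V2 (i + 1), F (e (i, u)) = e (i + 1, v)) ∧
      (∀ v ∈ V2 (i + 1), ∃ u ∈ V1 i, F (e (i, u)) = e (i + 1, v))) →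
    (∀ w : W, ∃ i : Fin (k + 1), ∃ u ∈ V1 i, F.SameCycle w (e (i, u))) →
    ∃ F' : Equiv.Perm W,
      (∀ w w' : W, F'.SameCycle w w') ∧
      (∀ w : W, (∀ i : Fin (k + 1), ∀ u ∈ V1 i, w ≠ e (i, u)) → F' w = F w) ∧
      (∀ i : Fin (k + 1), ∀ u ∈ V1 i, ∃ v ∈ V2 (i + 1),
        F' (e (i, u)) = e (i + 1, v) ∧ G (i, u) (i + 1, v)) := by
  intro d hd hd1
  have hd1' : (0:ℝ) < 1 - d := by linarith
  refine ⟨d * d * (1 - d) / 100, by positivity, ?_⟩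
  intro ε hε hεd0 k
  refine ⟨Nat.ceil (10 / ε) + 1, ?_⟩
  intro m hm0 G hsr V1 V2 hV hcard W instW e F hFm hcyc
  classical
  -- numeric setup
  have hεd : 100 * ε ≤ d * d * (1 - d) := by
    have := hεd0
    nlinarith
  have hεm : 10 ≤ ε * m := by
    have h1 : (10 / ε : ℝ) ≤ (Nat.ceil (10 / ε) : ℝ) := Nat.le_ceil _
    have h2 : ((Nat.ceil (10 / ε) + 1 : ℕ) : ℝ) ≤ (m : ℝ) := by exact_mod_cast hm0
    have h3 : (10 / ε : ℝ) ≤ (m : ℝ) := by push_cast at h2; linarith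
    calc (10:ℝ) = ε * (10 / ε) := by field_simp
      _ ≤ ε * m := by
        apply mul_le_mul_of_nonneg_left h3 (le_of_lt hε)
  have hm : 0 < m := by
    rcases Nat.eq_zero_or_pos m with rfl | h
    · exfalso
      have h10 : (10:ℝ) ≤ 0 := by simpa using hεm
      linarith
    · exact h
  letI : Fintype W := instW
  -- unpack super-regularity
  have hreg : ∀ i, EpsRegularPair (fun u v : Fin m => G (i, u) (i + 1, v)) ε :=
    fun i => (hsr i).1
  have hdeg : ∀ (i : Fin (k+1)) (a : Fin m),
      (d - ε) * m ≤ ((Finset.univ.filter (fun b => G (i, a) (i + 1, b))).card : ℝ) := by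
    intro i a
    have h := (hsr i).2.1 a
    rwa [Fintype.card_fin] at h
  have hdegin : ∀ (i : Fin (k+1)) (b : Fin m),
      (d - ε) * m ≤ ((Finset.univ.filter (fun a => G (i, a) (i + 1, b))).card : ℝ) := by
    intro i b
    have h := (hsr i).2.2 b
    rwa [Fintype.card_fin] at h
  -- base admissible permutation from Hall matchings
  have hmatch : ∀ i, ∃ M : Fin m → Fin m,
      (∀ u ∈ V1 i, M u ∈ V2 (i+1) ∧ G (i, u) (i+1, M u)) ∧
      Set.InjOn M (V1 i) ∧ (V1 i).image M = V2 (i+1) := by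
    intro i
    have hεd8 : ε ≤ d / 8 := by nlinarith
    have hεm1 : 1 ≤ ε * m := by linarith
    exact S19.exists_matching hm hε hd hd1 hεd8 hεm1 (hreg i) (hdeg i) (hdegin i)
      (hV i).1 (hV (i+1)).2 (hcard i)
  obtain ⟨P0, hadm0⟩ := S19.exists_adm G V1 V2 e F hmatch (fun i => (hFm i).2)
  -- a starting matched vertex
  have hV0ne : (V1 (0 : Fin (k+1))).Nonempty := by
    rw [← Finset.card_pos]
    have h := (hV (0 : Fin (k+1))).1
    have : (0:ℝ) < ((V1 (0 : Fin (k+1))).card : ℝ) := by nlinarith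
    exact_mod_cast this
  obtain ⟨u₀, hu₀⟩ := hV0ne
  -- saturate
  obtain ⟨P, hadm, hsat⟩ := S19.saturate G V1 V2 e F hm hε hd hd1 hεd hεm hreg hdeg hdegin
    hV hcard (0 : Fin (k+1)) u₀ hu₀ (Finset.univ : Finset (Fin (k+1) × Fin m)).card
    P0 hadm0 (Finset.card_filter_le _ _)
  -- the cycle of w₀ covers everything
  have hcover : ∀ w : W, P.SameCycle (e ((0 : Fin (k+1)), u₀)) w := by
    intro w
    obtain ⟨i, u, hu, hsc⟩ := hcyc w
    obtain ⟨nn, _, hnn⟩ := hsc.exists_pow_eq'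
    set Mset : Set W := {w' | ∃ j uu, uu ∈ V1 j ∧ e (j, uu) = w'} with hMset
    have hag : ∀ w', w' ∉ Mset → P w' = F w' := by
      intro w' hw'
      apply hadm.1
      intro j uu huu heq
      exact hw' ⟨j, uu, huu, heq⟩
    obtain ⟨n', hmem, _, hsc'⟩ := S19.reach F P Mset hag w
      ⟨nn, by rw [hnn]; exact ⟨i, u, hu, rfl⟩⟩
    obtain ⟨j, uu, huu, heq⟩ := hmem
    have h1 : P.SameCycle (e ((0 : Fin (k+1)), u₀)) (e (j, uu)) := hsat j uu huu
    rw [heq] at h1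
    exact h1.trans hsc'.symm
  refine ⟨P, ?_, ?_, hadm.2⟩
  · intro w w'
    exact (hcover w).symm.trans (hcover w')
  · intro w hw
    apply hadm.1
    intro j uu huu heq
    exact hw j uu huu heq.symm
end
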